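/- arXiv:1501.04755 — 7 statements merged into one kernel-verified Lean document; each statement's English description precedes it below -/
import Mathlib

section
/- Let a ∈ ℝ^p with a_+ ≠ 0, where (a_+)_j = max(a_j, 0), and let 1 ≤ s ≤ √p. Suppose Δ ≥ 0 is such that S(a_+, Δ) ≠ 0 and the vector w = S(a_+, Δ)/‖S(a_+, Δ)‖_{ℓ²} satisfies either (i) Δ = 0 and ‖w‖_{ℓ¹} ≤ s, or (ii) Δ > 0 and ‖w‖_{ℓ¹} = s. Then w maximizes ⟨w', a⟩ over all w' ∈ ℝ^p satisfying ‖w'‖_{ℓ²} ≤ 1, ‖w'‖_{ℓ¹} ≤ s, and w'_j ≥ 0 for all j. -/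
open Finset

noncomputable section

/-- The soft thresholding operator `S(x, c) = sign(x)(|x| − c)₊`. -/
def softThreshold (x c : ℝ) : ℝ := Real.sign x * max (|x| - c) 0

/-- Witten–Tibshirani: for `1 ≤ s ≤ √p`, the normalized soft-thresholded vector
`w = S(a₊, Δ)/‖S(a₊, Δ)‖_{ℓ²}` (with `Δ = 0` if that yields `‖w‖_{ℓ¹} ≤ s`, and
otherwise `Δ > 0` chosen so that `‖w‖_{ℓ¹} = s`) maximizes `⟨w', a⟩` over all
`w'` with `‖w'‖_{ℓ²} ≤ 1`, `‖w'‖_{ℓ¹} ≤ s` and `w'_j ≥ 0` for all `j`. -/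
theorem soft_thresholding_solution (p : ℕ) (a : Fin p → ℝ) (s Δ : ℝ)
    (hs1 : 1 ≤ s) (hs2 : s ≤ Real.sqrt p) (hΔ : 0 ≤ Δ)
    (haplus : (fun j => max (a j) 0) ≠ (0 : Fin p → ℝ))
    (S : Fin p → ℝ) (hS : S = fun j => softThreshold (max (a j) 0) Δ)
    (hSne : S ≠ (0 : Fin p → ℝ))
    (w : Fin p → ℝ) (hw : w = fun j => S j / Real.sqrt (∑ i, S i ^ 2))
    (hcase : (Δ = 0 ∧ ∑ j, |w j| ≤ s) ∨ (0 < Δ ∧ ∑ j, |w j| = s)) :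
    ∀ w' : Fin p → ℝ, Real.sqrt (∑ j, w' j ^ 2) ≤ 1 → (∑ j, |w' j|) ≤ s →
      (∀ j, 0 ≤ w' j) → ∑ j, w' j * a j ≤ ∑ j, w j * a j := by
  intro w' hl2 hl1 hpos
  have hSeq : ∀ j, S j = max (max (a j) 0 - Δ) 0 := by
    intro j
    rw [hS]
    simp only [softThreshold]
    rcases lt_or_eq_of_le (le_max_right (a j) 0) with h | h
    · rw [abs_of_pos h, Real.sign_of_pos h, one_mul]
    · rw [← h]
      simp [hΔ]
  have hS0 : ∀ j, 0 ≤ S j := fun j => by rw [hSeq j]; exact le_max_right _ _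
  have hQ : 0 < ∑ i, S i ^ 2 := by
    obtain ⟨j, hj⟩ := Function.ne_iff.mp hSne
    exact Finset.sum_pos' (fun i _ => sq_nonneg _) ⟨j, Finset.mem_univ j, by have := abs_pos.mpr hj; nlinarith [sq_abs (S j)]⟩
  set N := Real.sqrt (∑ i, S i ^ 2) with hN
  have hN0 : 0 < N := Real.sqrt_pos.mpr hQ
  have hNsq : N ^ 2 = ∑ i, S i ^ 2 := Real.sq_sqrt hQ.le
  have hw0 : ∀ j, 0 ≤ w j := fun j => by rw [hw]; exact div_nonneg (hS0 j) hN0.le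
  -- Cauchy–Schwarz: ∑ w' S ≤ N
  have hCS : ∑ j, w' j * S j ≤ N := by
    have h1 : (∑ j, w' j * S j) ^ 2 ≤ (∑ j, w' j ^ 2) * ∑ j, S j ^ 2 :=
      Finset.sum_mul_sq_le_sq_mul_sq _ _ _
    have h2 : ∑ j, w' j ^ 2 ≤ 1 := by
      have h := Real.sq_sqrt (Finset.sum_nonneg (s := Finset.univ) fun j _ => sq_nonneg (w' j))
      nlinarith [Real.sqrt_nonneg (∑ j, w' j ^ 2), h]
    have h3 : (∑ j, w' j * S j) ^ 2 ≤ N ^ 2 := by nlinarith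
    have h4 : 0 ≤ ∑ j, w' j * S j :=
      Finset.sum_nonneg fun j _ => mul_nonneg (hpos j) (hS0 j)
    nlinarith
  -- termwise bound for w'
  have hub : ∀ j, w' j * a j ≤ w' j * S j + Δ * w' j := by
    intro j
    have h1 : a j ≤ S j + Δ := by
      have := hSeq j
      have h2 : max (a j) 0 - Δ ≤ S j := by rw [this]; exact le_max_left _ _
      have h3 : a j ≤ max (a j) 0 := le_max_left _ _
      linarith
    nlinarith [hpos j, mul_le_mul_of_nonneg_left h1 (hpos j)]
  -- termwise identity for w
  have hid : ∀ j, w j * a j = w j * S j + Δ * w j := by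
    intro j
    rcases eq_or_lt_of_le (hS0 j) with h | h
    · have hwj : w j = 0 := by rw [hw]; simp [← h]
      rw [hwj]; ring
    · have hmax : 0 < max (a j) 0 - Δ := by
        by_contra hc
        push_neg at hc
        have : S j = 0 := by rw [hSeq j, max_eq_right hc]
        linarith
      have haj : 0 < a j := by
        rcases le_or_gt (a j) 0 with h' | h'
        · rw [max_eq_right h'] at hmax; linarith
        · exact h'
      have hSj : S j = a j - Δ := by
        rw [hSeq j, max_eq_left hmax.le, max_eq_left haj.le]
      rw [hSj]; ring
  have key : Δ * ∑ j, |w j| = Δ * s := by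
    rcases hcase with ⟨h0, _⟩ | ⟨_, he⟩
    · rw [h0]; ring
    · rw [he]
  have habsw : ∀ j, |w j| = w j := fun j => abs_of_nonneg (hw0 j)
  have hwS : ∑ j, w j * S j = N := by
    rw [hw]
    have : ∑ j, S j / N * S j = (∑ j, S j ^ 2) / N := by
      rw [Finset.sum_div]
      exact Finset.sum_congr rfl fun j _ => by ring
    rw [← hN] at *
    rw [this, ← hNsq]
    rw [sq, mul_div_assoc, div_self hN0.ne', mul_one]
  calc ∑ j, w' j * a j ≤ ∑ j, (w' j * S j + Δ * w' j) :=
        Finset.sum_le_sum fun j _ => hub j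
    _ = (∑ j, w' j * S j) + Δ * ∑ j, w' j := by
        rw [Finset.sum_add_distrib, Finset.mul_sum]
    _ ≤ N + Δ * s := by
        have h5 : ∑ j, w' j ≤ s := by
          calc ∑ j, w' j = ∑ j, |w' j| :=
                Finset.sum_congr rfl fun j _ => (abs_of_nonneg (hpos j)).symm
            _ ≤ s := hl1
        have := mul_le_mul_of_nonneg_left h5 hΔ
        linarith
    _ = (∑ j, w j * S j) + Δ * ∑ j, |w j| := by
        rw [hwS, key]
    _ = ∑ j, (w j * S j + Δ * w j) := by
        rw [Finset.sum_add_distrib, Finset.mul_sum]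
        simp_rw [habsw]
    _ = ∑ j, w j * a j := Finset.sum_congr rfl fun j _ => (hid j).symm
end
end

section
/- If w ∈ ℝ^p is a maximizer of the hard-thresholding sparse clustering problem, then its support {j : w_j > 0} equals B, the set of indices of the p − m largest entries of b. -/
open scoped Classical
open Finset

noncomputable section

/-- A vector `w ∈ ℝ^p` is feasible for the hard-thresholding sparse clustering problem
if `‖w‖_{ℓ²} ≤ 1`, `w_j ≥ 0` for all `j`, and exactly `m` of its components are zero. -/
def Feasible (p m : ℕ) (w : Fin p → ℝ) : Prop :=
  Real.sqrt (∑ j, w j ^ 2) ≤ 1 ∧ (∀ j, 0 ≤ w j) ∧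
    (Finset.univ.filter (fun j => w j = 0)).card = m

/-- The set `B` of indices of the `p − m` largest entries of `b`; for distinct entries,
`i ∈ B` iff at least `m` entries lie strictly below `b i`, i.e. `b i > b_(m)`. -/
def Bset (p m : ℕ) (b : Fin p → ℝ) : Finset (Fin p) :=
  Finset.univ.filter (fun i => m ≤ (Finset.univ.filter (fun j => b j < b i)).card)

/-- If `w` is a maximizer of the hard-thresholding sparse clustering problem, then
its support `{j : w_j > 0}` equals `B`, the set of indices of the `p − m` largest
entries of `b`. -/
theorem maximizer_support_eq_Bset (p m : ℕ) (b : Fin p → ℝ)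
    (hb : ∀ i, 0 < b i) (hinj : Function.Injective b) (hm : m < p)
    (w : Fin p → ℝ) (hw : Feasible p m w)
    (hmax : ∀ w' : Fin p → ℝ, Feasible p m w' → ∑ j, w' j * b j ≤ ∑ j, w j * b j) :
    Finset.univ.filter (fun j => 0 < w j) = Bset p m b := by
  obtain ⟨hnorm, hnn, hcard⟩ := hw
  set r : Fin p → ℕ := fun i => (Finset.univ.filter (fun j => b j < b i)).card with hr
  -- r is strictly monotone w.r.t. b
  have hrmono : ∀ i j : Fin p, b i < b j → r i < r j := by
    intro i j hij
    apply Finset.card_lt_card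
    constructor
    · intro x hx
      simp only [Finset.mem_filter, Finset.mem_univ, true_and] at hx ⊢
      exact lt_trans hx hij
    · intro hsub
      have := hsub (by simp [hij] : i ∈ Finset.univ.filter (fun x => b x < b j))
      simp at this
  have hrinj : Function.Injective r := by
    intro i j hij
    by_contra hne
    rcases lt_trichotomy (b i) (b j) with h | h | h
    · exact absurd hij (Nat.ne_of_lt (hrmono i j h))
    · exact hne (hinj h)
    · exact absurd hij.symm (Nat.ne_of_lt (hrmono j i h))
  have hrlt : ∀ i, r i < p := by
    intro i
    have : (Finset.univ.filter (fun j => b j < b i)) ⊆ Finset.univ.erase i := by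
      intro x hx
      simp only [Finset.mem_filter, Finset.mem_univ, true_and] at hx
      simp only [Finset.mem_erase, Finset.mem_univ, and_true]
      intro h; rw [h] at hx; exact lt_irrefl _ hx
    calc r i ≤ (Finset.univ.erase i).card := Finset.card_le_card this
      _ = p - 1 := by simp
      _ < p := Nat.sub_lt (Nat.zero_lt_of_lt hm) one_pos
  -- card of Bset ≤ p - m
  have hBcard : (Bset p m b).card ≤ p - m := by
    have : (Bset p m b).card ≤ (Finset.Ico m p).card := by
      apply Finset.card_le_card_of_injOn r
      · intro i hi
        simp only [Bset, Finset.mem_coe, Finset.mem_filter, Finset.mem_univ, true_and] at hi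
        exact Finset.mem_Ico.mpr ⟨hi, hrlt i⟩
      · exact fun i _ j _ h => hrinj h
    simpa using this
  -- card of support = p - m
  have hsupp : (Finset.univ.filter (fun j => 0 < w j)).card = p - m := by
    have heq : Finset.univ.filter (fun j => 0 < w j)
        = Finset.univ \ Finset.univ.filter (fun j => w j = 0) := by
      ext j
      simp only [Finset.mem_filter, Finset.mem_univ, true_and, Finset.mem_sdiff]
      constructor
      · intro h h0; rw [h0] at h; exact lt_irrefl _ h
      · intro h; exact lt_of_le_of_ne (hnn j) (Ne.symm h)
    rw [heq, Finset.card_sdiff_of_subset (Finset.filter_subset _ _), hcard, Finset.card_univ,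
      Fintype.card_fin]
  -- support ⊆ Bset
  have hsub : Finset.univ.filter (fun j => 0 < w j) ⊆ Bset p m b := by
    intro i hi
    simp only [Finset.mem_filter, Finset.mem_univ, true_and] at hi
    by_contra hiB
    simp only [Bset, Finset.mem_filter, Finset.mem_univ, true_and, not_le] at hiB
    -- there is k with w k = 0 and b i < b k
    have hk : ∃ k, w k = 0 ∧ b i < b k := by
      by_contra h
      push_neg at h
      have hsub' : Finset.univ.filter (fun j => w j = 0)
          ⊆ Finset.univ.filter (fun j => b j < b i) := by
        intro k hk'
        simp only [Finset.mem_filter, Finset.mem_univ, true_and] at hk' ⊢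
        have hle := h k hk'
        rcases lt_or_eq_of_le hle with h' | h'
        · exact h'
        · exfalso
          have : k = i := hinj h'
          rw [this] at hk'
          rw [hk'] at hi; exact lt_irrefl _ hi
      have := Finset.card_le_card hsub'
      rw [hcard] at this
      exact absurd this (not_le.mpr hiB)
    obtain ⟨k, hk0, hbik⟩ := hk
    have hki : k ≠ i := by
      intro h; rw [h] at hk0; rw [hk0] at hi; exact lt_irrefl _ hi
    -- swap construction
    set σ := Equiv.swap i k with hσ
    set w' : Fin p → ℝ := fun j => w (σ j) with hw'
    have hfeas : Feasible p m w' := by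
      refine ⟨?_, fun j => hnn _, ?_⟩
      · have : ∑ j, w' j ^ 2 = ∑ j, w j ^ 2 := Equiv.sum_comp σ (fun j => w j ^ 2)
        rw [this]; exact hnorm
      · rw [← hcard]
        apply Finset.card_bij' (fun j _ => σ j) (fun j _ => σ j)
        · intro j hj
          simp only [Finset.mem_filter, Finset.mem_univ, true_and] at hj ⊢
          exact hj
        · intro j hj
          simp only [Finset.mem_filter, Finset.mem_univ, true_and] at hj ⊢
          show w (σ (σ j)) = 0
          simpa [hσ] using hj
        · intro j _; simp [hσ]
        · intro j _; simp [hσ]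
    have hsum : ∑ j, w' j * b j = ∑ j, w j * b j + w i * (b k - b i) := by
      have h1 : ∑ j, w' j * b j = ∑ j, w j * b (σ j) := by
        have := Equiv.sum_comp σ (fun j => w' j * b j)
        rw [← this]
        apply Finset.sum_congr rfl
        intro j _
        simp [hw', hσ]
      rw [h1]
      have h2 : ∀ j, w j * b (σ j) = w j * b j + (if j = i then w i * (b k - b i) else 0) := by
        intro j
        by_cases hji : j = i
        · subst hji
          simp [hσ, Equiv.swap_apply_left]
          ring
        · by_cases hjk : j = k
          · subst hjk
            simp [hσ, Equiv.swap_apply_right, hji, hk0]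
          · simp [hσ, Equiv.swap_apply_of_ne_of_ne hji hjk, hji]
      rw [Finset.sum_congr rfl (fun j _ => h2 j), Finset.sum_add_distrib,
        Finset.sum_ite_eq' Finset.univ i (fun _ => w i * (b k - b i))]
      simp
    have := hmax w' hfeas
    rw [hsum] at this
    have hpos : 0 < w i * (b k - b i) := mul_pos hi (by linarith)
    linarith
  exact Finset.eq_of_subset_of_card_le hsub (by rw [hsupp]; exact hBcard)
end
end

section
/- The maximum value of ⟨w, b⟩ over all feasible vectors of the hard-thresholding sparse clustering problem equals (∑_{j∈B} b_j²)^{1/2}, and it is attained at w*. -/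
open scoped Classical
open Finset

noncomputable section

/-- The candidate optimal weight vector `w*`. -/
def wstar (p m : ℕ) (b : Fin p → ℝ) : Fin p → ℝ :=
  fun i => if i ∈ Bset p m b then b i / Real.sqrt (∑ j ∈ Bset p m b, b j ^ 2) else 0

namespace SparseAux

variable {p m : ℕ} {b : Fin p → ℝ}

/-- The rank of an index: the number of entries strictly below it. -/
def rank (b : Fin p → ℝ) (i : Fin p) : ℕ := (Finset.univ.filter (fun j => b j < b i)).card

lemma rank_lt (i : Fin p) : rank b i < p := by
  have : (Finset.univ.filter (fun j => b j < b i)) ⊂ Finset.univ := by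
    refine Finset.ssubset_univ_iff.2 ?_
    intro h
    have : i ∈ Finset.univ.filter (fun j => b j < b i) := by rw [h]; exact Finset.mem_univ i
    simp at this
  simpa [rank, Fintype.card_fin] using Finset.card_lt_card this

lemma rank_strictMonoOn (hi : b i < b j) : rank b i < rank b j := by
  have hsub : Finset.univ.filter (fun k => b k < b i) ⊂
      Finset.univ.filter (fun k => b k < b j) := by
    constructor
    · intro k hk
      simp only [Finset.mem_filter, Finset.mem_univ, true_and] at hk ⊢
      exact hk.trans hi
    · intro h
      have : i ∈ Finset.univ.filter (fun k => b k < b j) := by simp [hi]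
      have := h this
      simp at this
  exact Finset.card_lt_card hsub

lemma rank_injective (hinj : Function.Injective b) : Function.Injective (rank b) := by
  intro i j h
  by_contra hne
  rcases lt_trichotomy (b i) (b j) with hlt | heq | hgt
  · exact absurd h (Nat.ne_of_lt (rank_strictMonoOn hlt))
  · exact hne (hinj heq)
  · exact absurd h.symm (Nat.ne_of_lt (rank_strictMonoOn hgt))

lemma mem_Bset_iff {i : Fin p} : i ∈ Bset p m b ↔ m ≤ rank b i := by
  simp [Bset, rank]

lemma lt_of_not_mem_of_mem (hinj : Function.Injective b) {i j : Fin p}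
    (hi : i ∉ Bset p m b) (hj : j ∈ Bset p m b) : b i < b j := by
  rw [mem_Bset_iff] at hi hj
  push_neg at hi
  rcases lt_trichotomy (b i) (b j) with h | h | h
  · exact h
  · exact absurd (hinj h) (by rintro rfl; exact absurd hj (not_le.2 hi))
  · have := rank_strictMonoOn (b := b) h
    omega

lemma card_Bset (hinj : Function.Injective b) (hm : m ≤ p) : (Bset p m b).card = p - m := by
  classical
  -- the rank function, viewed as a map `Fin p → Fin p`, is bijective
  let r : Fin p → Fin p := fun i => ⟨rank b i, rank_lt i⟩
  have hrinj : Function.Injective r := by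
    intro i j h
    exact rank_injective hinj (congrArg Fin.val h)
  have hrbij : Function.Bijective r := (Finite.injective_iff_bijective).1 hrinj
  have hBeq : Bset p m b = Finset.univ.filter (fun i => m ≤ ((r i : Fin p) : ℕ)) := by
    ext i; simp [mem_Bset_iff, r]
  have hcard1 : (Bset p m b).card
      = (Finset.univ.filter (fun v : Fin p => m ≤ (v : ℕ))).card := by
    apply Finset.card_nbij r
    · intro a ha
      rw [hBeq] at ha
      simp only [Finset.mem_coe, Finset.mem_filter, Finset.mem_univ, true_and] at ha ⊢
      exact ha
    · exact hrinj.injOn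
    · intro v hv
      obtain ⟨i, rfl⟩ := hrbij.surjective v
      simp only [Finset.coe_filter, Set.mem_setOf_eq, Finset.mem_univ, true_and,
        Set.mem_image] at hv ⊢
      exact ⟨i, by rw [hBeq]; simpa using hv, rfl⟩
  rw [hcard1]
  -- count elements of `Fin p` that are `≥ m`
  have : (Finset.univ.filter (fun v : Fin p => m ≤ (v : ℕ))).card
      = p - (Finset.univ.filter (fun v : Fin p => (v : ℕ) < m)).card := by
    have := Finset.card_filter_add_card_filter_not
      (s := (Finset.univ : Finset (Fin p))) (p := fun v : Fin p => m ≤ (v : ℕ))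
    simp only [Fintype.card_fin, Finset.card_univ, not_le] at this
    omega
  rw [this]
  congr 1
  have : (Finset.univ.filter (fun v : Fin p => (v : ℕ) < m)).card = m := by
    have : (Finset.univ.filter (fun v : Fin p => (v : ℕ) < m))
        = (Finset.range m).attachFin (fun x hx => lt_of_lt_of_le (Finset.mem_range.1 hx) hm)
          := by
      ext v
      simp [Finset.mem_attachFin]
    rw [this, Finset.card_attachFin, Finset.card_range]
  rw [this]

lemma sum_sq_pos (hb : ∀ i, 0 < b i) (hinj : Function.Injective b) (hm : m < p) :
    0 < ∑ j ∈ Bset p m b, b j ^ 2 := by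
  have hcard : (Bset p m b).card = p - m := card_Bset hinj hm.le
  have hne : (Bset p m b).Nonempty := by
    rw [← Finset.card_pos, hcard]; omega
  obtain ⟨i, hi⟩ := hne
  exact Finset.sum_pos' (fun j _ => sq_nonneg _) ⟨i, hi, pow_pos (hb i) 2⟩

/-- Any set of `p - m` indices has sum of squares at most that of `Bset`. -/
lemma sum_sq_le (hb : ∀ i, 0 < b i) (hinj : Function.Injective b) (hm : m ≤ p)
    (S : Finset (Fin p)) (hS : S.card = p - m) :
    ∑ j ∈ S, b j ^ 2 ≤ ∑ j ∈ Bset p m b, b j ^ 2 := by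
  classical
  set B := Bset p m b with hB
  have hcardB : B.card = p - m := card_Bset hinj hm
  have hcards : (S \ B).card = (B \ S).card := by
    have h1 := Finset.card_inter_add_card_sdiff S B
    have h2 := Finset.card_inter_add_card_sdiff B S
    rw [Finset.inter_comm] at h2
    omega
  have key : ∑ j ∈ S \ B, b j ^ 2 ≤ ∑ j ∈ B \ S, b j ^ 2 := by
    rcases Finset.eq_empty_or_nonempty (S \ B) with he | hne
    · have hB0 : B \ S = ∅ :=
        Finset.card_eq_zero.1 (by rw [← hcards, he, Finset.card_empty])
      rw [he, hB0]
    · have hBSne : (B \ S).Nonempty := by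
        rw [← Finset.card_pos, ← hcards, Finset.card_pos]; exact hne
      obtain ⟨j0, hj0, hj0min⟩ := Finset.exists_min_image (B \ S) (fun j => b j ^ 2) hBSne
      have hle1 : ∑ j ∈ S \ B, b j ^ 2 ≤ (S \ B).card • (b j0 ^ 2) := by
        apply Finset.sum_le_card_nsmul
        intro i hi
        have hiS : i ∉ B := (Finset.mem_sdiff.1 hi).2
        have hj0B : j0 ∈ B := (Finset.mem_sdiff.1 hj0).1
        have hlt : b i < b j0 := lt_of_not_mem_of_mem hinj hiS hj0B
        have := (hb i).le
        nlinarith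
      have hle2 : (B \ S).card • (b j0 ^ 2) ≤ ∑ j ∈ B \ S, b j ^ 2 :=
        Finset.card_nsmul_le_sum _ _ _ (fun i hi => hj0min i hi)
      calc ∑ j ∈ S \ B, b j ^ 2 ≤ (S \ B).card • (b j0 ^ 2) := hle1
        _ = (B \ S).card • (b j0 ^ 2) := by rw [hcards]
        _ ≤ ∑ j ∈ B \ S, b j ^ 2 := hle2
  have h1 : ∑ j ∈ S, b j ^ 2 = ∑ j ∈ S ∩ B, b j ^ 2 + ∑ j ∈ S \ B, b j ^ 2 :=
    (Finset.sum_inter_add_sum_sdiff S B _).symm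
  have h2 : ∑ j ∈ B, b j ^ 2 = ∑ j ∈ S ∩ B, b j ^ 2 + ∑ j ∈ B \ S, b j ^ 2 := by
    rw [Finset.inter_comm]
    exact (Finset.sum_inter_add_sum_sdiff B S _).symm
  linarith

end SparseAux

open SparseAux

/-- The maximum of `⟨w, b⟩` over all feasible vectors of the hard-thresholding sparse
clustering problem equals `(∑_{j∈B} b_j²)^{1/2}`, and it is attained at `w*`. -/
theorem max_value_attained_at_wstar (p m : ℕ) (b : Fin p → ℝ)
    (hb : ∀ i, 0 < b i) (hinj : Function.Injective b) (hm : m < p) :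
    Feasible p m (wstar p m b) ∧
    (∑ j, wstar p m b j * b j = Real.sqrt (∑ j ∈ Bset p m b, b j ^ 2)) ∧
    ∀ w : Fin p → ℝ, Feasible p m w →
      ∑ j, w j * b j ≤ Real.sqrt (∑ j ∈ Bset p m b, b j ^ 2) := by
  classical
  set B := Bset p m b with hB
  set s := Real.sqrt (∑ j ∈ B, b j ^ 2) with hs
  have hsumpos : 0 < ∑ j ∈ B, b j ^ 2 := sum_sq_pos hb hinj hm
  have hspos : 0 < s := Real.sqrt_pos.2 hsumpos
  have hs2 : s ^ 2 = ∑ j ∈ B, b j ^ 2 := Real.sq_sqrt hsumpos.le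
  have hcardB : B.card = p - m := card_Bset hinj hm.le
  have hwsq : ∑ j, wstar p m b j ^ 2 = 1 := by
    rw [← Finset.sum_subset (Finset.subset_univ B)]
    · have : ∀ j ∈ B, wstar p m b j ^ 2 = b j ^ 2 / s ^ 2 := by
        intro j hj
        simp [wstar, ← hB, hj, ← hs, div_pow]
      rw [Finset.sum_congr rfl this, ← Finset.sum_div, ← hs2]
      field_simp
    · intro j _ hj
      simp [wstar, ← hB, hj]
  refine ⟨⟨?_, ?_, ?_⟩, ?_, ?_⟩
  · rw [hwsq, Real.sqrt_one]
  · intro j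
    by_cases hj : j ∈ B
    · simp only [wstar, ← hB, hj, if_pos]
      exact div_nonneg (hb j).le (Real.sqrt_nonneg _)
    · simp [wstar, ← hB, hj]
  · have hzero : Finset.univ.filter (fun j => wstar p m b j = 0) = Bᶜ := by
      ext j
      simp only [Finset.mem_filter, Finset.mem_univ, true_and, Finset.mem_compl]
      constructor
      · intro h hj
        simp only [wstar, ← hB, hj, if_pos] at h
        exact absurd h (div_ne_zero (hb j).ne' hspos.ne')
      · intro h
        simp [wstar, ← hB, h]
    rw [hzero, Finset.card_compl, hcardB, Fintype.card_fin]
    omega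
  · rw [← Finset.sum_subset (Finset.subset_univ B)]
    · have : ∀ j ∈ B, wstar p m b j * b j = b j ^ 2 / s := by
        intro j hj
        simp only [wstar, ← hB, hj, if_pos, ← hs]
        ring
      rw [Finset.sum_congr rfl this, ← Finset.sum_div, ← hs2]
      field_simp
    · intro j _ hj
      simp [wstar, ← hB, hj]
  · rintro w ⟨hw1, hw2, hw3⟩
    set S := Finset.univ.filter (fun j => w j ≠ 0) with hS
    have hScard : S.card = p - m := by
      have := Finset.card_filter_add_card_filter_not
        (s := (Finset.univ : Finset (Fin p))) (p := fun j => w j = 0)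
      simp only [Finset.card_univ, Fintype.card_fin, hw3] at this
      have hSeq : S = Finset.univ.filter (fun j => ¬ w j = 0) := rfl
      rw [hSeq]
      omega
    have hsum_eq : ∑ j, w j * b j = ∑ j ∈ S, w j * b j := by
      rw [← Finset.sum_subset (Finset.subset_univ S)]
      intro j _ hj
      simp only [hS, Finset.mem_filter, Finset.mem_univ, true_and, not_not] at hj
      rw [hj, zero_mul]
    have hwsum : ∑ j, w j ^ 2 ≤ 1 := by
      have h0 : (0:ℝ) ≤ ∑ j, w j ^ 2 := Finset.sum_nonneg fun j _ => sq_nonneg _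
      nlinarith [Real.sq_sqrt h0, Real.sqrt_nonneg (∑ j, w j ^ 2)]
    have hcs : ∑ j ∈ S, w j * b j ≤
        Real.sqrt (∑ j ∈ S, w j ^ 2) * Real.sqrt (∑ j ∈ S, b j ^ 2) :=
      Real.sum_mul_le_sqrt_mul_sqrt S w b
    have h1 : Real.sqrt (∑ j ∈ S, w j ^ 2) ≤ 1 := by
      have hle : ∑ j ∈ S, w j ^ 2 ≤ ∑ j, w j ^ 2 :=
        Finset.sum_le_sum_of_subset_of_nonneg (Finset.subset_univ S)
          (fun j _ _ => sq_nonneg _)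
      calc Real.sqrt (∑ j ∈ S, w j ^ 2) ≤ Real.sqrt 1 :=
            Real.sqrt_le_sqrt (hle.trans hwsum)
        _ = 1 := Real.sqrt_one
    have h2 : Real.sqrt (∑ j ∈ S, b j ^ 2) ≤ s :=
      Real.sqrt_le_sqrt (sum_sq_le hb hinj hm.le S hScard)
    have hnn : 0 ≤ Real.sqrt (∑ j ∈ S, b j ^ 2) := Real.sqrt_nonneg _
    calc ∑ j, w j * b j = ∑ j ∈ S, w j * b j := hsum_eq
      _ ≤ Real.sqrt (∑ j ∈ S, w j ^ 2) * Real.sqrt (∑ j ∈ S, b j ^ 2) := hcs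
      _ ≤ 1 * s := mul_le_mul h1 h2 hnn zero_le_one
      _ = s := one_mul s
end
end

section
/- Let g be feasible for the functional sparse clustering problem. Suppose Γ̃ ⊆ D∖B is measurable with μ(Γ̃) > 0 and ∫_{Γ̃} g dμ > 0, and suppose τ ∈ ℝ is such that Γ̃ + τ ⊆ B and g = 0 μ-a.e. on Γ̃ + τ. Define g̃ by g̃(x) = 0 for x ∈ Γ̃, g̃(x) = g(x − τ) for x ∈ Γ̃ + τ, and g̃(x) = g(x) for all other x ∈ D. Then g̃ is feasible and ∫_D g̃ b dμ > ∫_D g b dμ. -/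
open MeasureTheory
open scoped ENNReal Classical

noncomputable section

/-- A function `w` is feasible for the functional sparse clustering problem on `D` if
`w ∈ L²(D)`, `‖w‖_{L²(D)} ≤ 1`, `w ≥ 0` μ-a.e. on `D`, and `μ({x ∈ D : w(x) = 0}) ≥ m`. -/
def FeasibleF (D : Set ℝ) (m : ℝ) (w : ℝ → ℝ) : Prop :=
  MemLp w 2 (volume.restrict D) ∧
  (∫ x in D, (w x) ^ 2) ≤ 1 ∧
  (∀ᵐ x ∂(volume.restrict D), 0 ≤ w x) ∧
  ENNReal.ofReal m ≤ volume {x ∈ D | w x = 0}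

/-- The set `B = {x ∈ D : b(x) > k}`. -/
def Bf (D : Set ℝ) (b : ℝ → ℝ) (k : ℝ) : Set ℝ := {x ∈ D | k < b x}

set_option maxHeartbeats 1000000 in
/-- Translating the mass of a feasible `g` from a positive-measure set `Γ̃ ⊆ D∖B`
(where `∫_{Γ̃} g dμ > 0`) onto `Γ̃ + τ ⊆ B` (where `g = 0` μ-a.e.) produces a feasible
`g̃` with a strictly larger objective value. -/
theorem translate_increases_objective (D : Set ℝ) (hD : IsCompact D) (m : ℝ) (b : ℝ → ℝ)
    (hm : 0 < m) (hmD : ENNReal.ofReal m < volume D) (hDfin : volume D < ⊤)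
    (hb : ContinuousOn b D)
    (hbpos : ∀ᵐ x ∂(volume.restrict D), 0 ≤ b x)
    (k : ℝ) (hk : 0 ≤ k)
    (hkm : volume (Bf D b k) = volume D - ENNReal.ofReal m)
    (g : ℝ → ℝ) (hg : FeasibleF D m g)
    (Γ : Set ℝ) (hΓmeas : MeasurableSet Γ) (hΓsub : Γ ⊆ D \ Bf D b k)
    (hΓpos : 0 < volume Γ)
    (hgint : 0 < ∫ x in Γ, g x)
    (τ : ℝ) (hτ : (fun x => x + τ) '' Γ ⊆ Bf D b k)
    (hgz : ∀ᵐ x ∂(volume.restrict ((fun x => x + τ) '' Γ)), g x = 0)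
    (gt : ℝ → ℝ)
    (hgt : gt = fun x => if x ∈ Γ then 0
      else if x ∈ (fun y => y + τ) '' Γ then g (x - τ) else g x) :
    FeasibleF D m gt ∧ (∫ x in D, g x * b x) < ∫ x in D, gt x * b x := by
  classical
  obtain ⟨hgL2, hgnorm, hg0, hgm⟩ := hg
  set Γ' : Set ℝ := (fun x => x + τ) '' Γ with hΓ'def
  have hDmeas : MeasurableSet D := hD.isClosed.measurableSet
  have hΓD : Γ ⊆ D := fun x hx => (hΓsub hx).1
  have hΓ'D : Γ' ⊆ D := fun x hx => (hτ hx).1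
  have hΓ'mem : ∀ x : ℝ, x ∈ Γ' ↔ x - τ ∈ Γ := by
    intro x; constructor
    · rintro ⟨y, hy, rfl⟩; simpa using hy
    · intro h; exact ⟨x - τ, h, by ring⟩
  have hΓ'meas : MeasurableSet Γ' := by
    have h : Γ' = (fun x : ℝ => x - τ) ⁻¹' Γ := Set.ext fun x => hΓ'mem x
    rw [h]; exact hΓmeas.preimage (measurable_id.sub_const τ)
  have hdisj : Disjoint Γ Γ' := by
    rw [Set.disjoint_left]
    intro x hx hx'
    exact (hΓsub hx).2 (hτ hx')
  set R : Set ℝ := D \ (Γ ∪ Γ') with hRdef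
  have hRmeas : MeasurableSet R := hDmeas.diff (hΓmeas.union hΓ'meas)
  have hD2 : D = (Γ ∪ Γ') ∪ R := (Set.union_diff_cancel (Set.union_subset hΓD hΓ'D)).symm
  have hdisj2 : Disjoint (Γ ∪ Γ') R := disjoint_sdiff_self_right
  -- pointwise description of gt
  have hgtΓ : ∀ x ∈ Γ, gt x = 0 := by intro x hx; simp [hgt, hx]
  have hgtΓ'p : ∀ x ∈ Γ', gt x = g (x - τ) := by
    intro x hx
    have hxΓ : x ∉ Γ := fun h => Set.disjoint_left.1 hdisj h hx
    simp [hgt, hxΓ, hΓ'def ▸ hx, hx]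
  have hgtR : ∀ x, x ∉ Γ → x ∉ Γ' → gt x = g x := by
    intro x h1 h2
    have h2' : x ∉ (fun y : ℝ => y + τ) '' Γ := h2
    simp [hgt, h1, h2', h2]
  -- measure preserving machinery
  have hmp : MeasurePreserving (fun x : ℝ => x + τ) volume volume :=
    measurePreserving_add_right volume τ
  have hemb : MeasurableEmbedding (fun x : ℝ => x + τ) :=
    (MeasurableEquiv.addRight τ).measurableEmbedding
  have hmpΓ : MeasurePreserving (fun x : ℝ => x + τ) (volume.restrict Γ) (volume.restrict Γ') :=
    hmp.restrict_image_emb hemb Γ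
  have hsubeq : (fun x : ℝ => x - τ) = (fun x : ℝ => x + (-τ)) := funext fun x => sub_eq_add_neg x τ
  have hmpS : MeasurePreserving (fun x : ℝ => x - τ) volume volume := by
    rw [hsubeq]; exact measurePreserving_add_right volume (-τ)
  have hembS : MeasurableEmbedding (fun x : ℝ => x - τ) := by
    rw [hsubeq]; exact (MeasurableEquiv.addRight (-τ)).measurableEmbedding
  have hpre : (fun x : ℝ => x - τ) ⁻¹' Γ = Γ' := by
    ext x; exact (hΓ'mem x).symm
  have hmpΓ' : MeasurePreserving (fun x : ℝ => x - τ) (volume.restrict Γ') (volume.restrict Γ) := by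
    have h := hmpS.restrict_preimage_emb hembS Γ
    rwa [hpre] at h
  -- translation invariance of volume
  have htrans : ∀ s : Set ℝ, volume ((fun x : ℝ => x + τ) '' s) = volume s := by
    intro s
    rw [Set.image_add_right]
    exact measure_preimage_add_right volume (-τ) s
  -- restrictions
  have hleΓ : volume.restrict Γ ≤ volume.restrict D := Measure.restrict_mono hΓD le_rfl
  have hleΓ' : volume.restrict Γ' ≤ volume.restrict D := Measure.restrict_mono hΓ'D le_rfl
  have hleR : volume.restrict R ≤ volume.restrict D := Measure.restrict_mono Set.diff_subset le_rfl
  have hres : volume.restrict D = (volume.restrict Γ + volume.restrict Γ') + volume.restrict R := by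
    rw [hD2, Measure.restrict_union hdisj2 hRmeas, Measure.restrict_union hdisj hΓ'meas]
  -- a.e. descriptions of gt on the pieces
  have hgtΓae : gt =ᵐ[volume.restrict Γ] (fun _ => (0 : ℝ)) :=
    (ae_restrict_mem hΓmeas).mono fun x hx => hgtΓ x hx
  have hgtΓ'ae : gt =ᵐ[volume.restrict Γ'] (fun x => g (x - τ)) :=
    (ae_restrict_mem hΓ'meas).mono fun x hx => hgtΓ'p x hx
  have hgtRae : gt =ᵐ[volume.restrict R] g :=
    (ae_restrict_mem hRmeas).mono fun x hx =>
      hgtR x (fun h => hx.2 (Or.inl h)) (fun h => hx.2 (Or.inr h))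
  -- AE strong measurability of gt
  have haesm_gD : AEStronglyMeasurable g (volume.restrict D) := hgL2.aestronglyMeasurable
  have haesm_gΓ : AEStronglyMeasurable g (volume.restrict Γ) := haesm_gD.mono_measure hleΓ
  have haesm_shift : AEStronglyMeasurable (fun x => g (x - τ)) (volume.restrict Γ') := by
    have h := (hmpΓ'.aestronglyMeasurable_comp_iff hembS).2 haesm_gΓ
    exact h
  have haesm_gt : AEStronglyMeasurable gt (volume.restrict D) := by
    rw [hres]
    refine AEStronglyMeasurable.add_measure (AEStronglyMeasurable.add_measure ?_ ?_) ?_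
    · exact aestronglyMeasurable_const.congr hgtΓae.symm
    · exact haesm_shift.congr hgtΓ'ae.symm
    · exact (haesm_gD.mono_measure hleR).congr hgtRae.symm
  -- integrability of squares
  have hq_D : IntegrableOn (fun x => g x ^ 2) D volume := hgL2.integrable_sq
  have hq_Γ : IntegrableOn (fun x => g x ^ 2) Γ volume := hq_D.mono_set hΓD
  have hq_Γ' : IntegrableOn (fun x => g x ^ 2) Γ' volume := hq_D.mono_set hΓ'D
  have hq_R : IntegrableOn (fun x => g x ^ 2) R volume := hq_D.mono_set Set.diff_subset
  have hqt_Γ : IntegrableOn (fun x => gt x ^ 2) Γ volume := by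
    have h : (fun _ => (0 : ℝ)) =ᵐ[volume.restrict Γ] (fun x => gt x ^ 2) :=
      hgtΓae.mono fun x hx => by simp [hx]
    exact (integrable_zero _ _ _).congr h
  have hqt_Γ' : IntegrableOn (fun x => gt x ^ 2) Γ' volume := by
    have h1 : Integrable ((fun y => g y ^ 2) ∘ (fun x : ℝ => x - τ)) (volume.restrict Γ') :=
      (hmpΓ'.integrable_comp_emb hembS).2 hq_Γ
    refine h1.congr (hgtΓ'ae.mono fun x hx => ?_)
    simp [Function.comp, hx]
  have hqt_R : IntegrableOn (fun x => gt x ^ 2) R volume :=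
    hq_R.congr (hgtRae.mono fun x hx => by simp [hx])
  have hqt_D : IntegrableOn (fun x => gt x ^ 2) D volume := by
    rw [hD2]; exact (hqt_Γ.union hqt_Γ').union hqt_R
  have hmemgt : MemLp gt 2 (volume.restrict D) :=
    (memLp_two_iff_integrable_sq haesm_gt).2 hqt_D
  -- splitting of integrals over D
  have hsplit : ∀ h : ℝ → ℝ, IntegrableOn h Γ volume → IntegrableOn h Γ' volume →
      IntegrableOn h R volume →
      ∫ x in D, h x = (∫ x in Γ, h x) + (∫ x in Γ', h x) + ∫ x in R, h x := by
    intro h h1 h2 h3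
    rw [hD2, setIntegral_union hdisj2 hRmeas (h1.union h2) h3,
      setIntegral_union hdisj hΓ'meas h1 h2]
  -- norm constraint
  have hsq_eq : ∫ x in D, gt x ^ 2 = ∫ x in D, g x ^ 2 := by
    have e0 : ∫ x in Γ, gt x ^ 2 = 0 :=
      integral_eq_zero_of_ae (hgtΓae.mono fun x hx => by simp [hx])
    have e1 : ∫ x in Γ', g x ^ 2 = 0 :=
      integral_eq_zero_of_ae (hgz.mono fun x hx => by simp [hx])
    have e2 : ∫ x in Γ', gt x ^ 2 = ∫ x in Γ, g x ^ 2 := by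
      have hcg : (fun x => gt x ^ 2) =ᵐ[volume.restrict Γ'] (fun x => g (x - τ) ^ 2) :=
        hgtΓ'ae.mono fun x hx => by simp only [hx]
      rw [integral_congr_ae hcg]
      have h := hmp.setIntegral_image_emb hemb (fun y => g (y - τ) ^ 2) Γ
      simpa only [add_sub_cancel_right] using h
    have e3 : ∫ x in R, gt x ^ 2 = ∫ x in R, g x ^ 2 :=
      integral_congr_ae (hgtRae.mono fun x hx => by simp only [hx])
    rw [hsplit _ hqt_Γ hqt_Γ' hqt_R, hsplit _ hq_Γ hq_Γ' hq_R, e0, e1, e2, e3]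
    ring
  -- nonnegativity
  have h0Γ : ∀ᵐ x ∂volume.restrict Γ, 0 ≤ g x := hg0.filter_mono (ae_mono hleΓ)
  have h0R : ∀ᵐ x ∂volume.restrict R, 0 ≤ g x := hg0.filter_mono (ae_mono hleR)
  have h0shift : ∀ᵐ x ∂volume.restrict Γ', 0 ≤ g (x - τ) :=
    hmpΓ'.quasiMeasurePreserving.tendsto_ae.eventually h0Γ
  have hgt0 : ∀ᵐ x ∂volume.restrict D, 0 ≤ gt x := by
    rw [hres, ae_add_measure_iff, ae_add_measure_iff]
    refine ⟨⟨?_, ?_⟩, ?_⟩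
    · exact hgtΓae.mono fun x hx => by rw [hx]
    · exact (h0shift.and hgtΓ'ae).mono fun x hx => hx.2 ▸ hx.1
    · exact (h0R.and hgtRae).mono fun x hx => hx.2 ▸ hx.1
  -- zero-set condition
  have hZt : ENNReal.ofReal m ≤ volume {x ∈ D | gt x = 0} := by
    set Z := {x ∈ D | g x = 0} with hZdef
    set S2 := (fun x : ℝ => x + τ) '' (Z ∩ Γ) with hS2def
    set S3 := Z \ (Γ ∪ Γ') with hS3def
    have hS2Γ' : S2 ⊆ Γ' := Set.image_mono Set.inter_subset_right
    have hUsub : Γ ∪ (S2 ∪ S3) ⊆ {x ∈ D | gt x = 0} := by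
      rintro x (hx | hx | hx)
      · exact ⟨hΓD hx, hgtΓ x hx⟩
      · obtain ⟨y, ⟨hyZ, hyΓ⟩, rfl⟩ := hx
        have hxΓ' : y + τ ∈ Γ' := ⟨y, hyΓ, rfl⟩
        refine ⟨hΓ'D hxΓ', ?_⟩
        rw [hgtΓ'p _ hxΓ']
        simpa using hyZ.2
      · refine ⟨hx.1.1, ?_⟩
        rw [hgtR x (fun h => hx.2 (Or.inl h)) (fun h => hx.2 (Or.inr h))]
        exact hx.1.2
    have hUeq : volume Γ + (volume (Z ∩ Γ) + volume S3) = volume (Γ ∪ (S2 ∪ S3)) := by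
      rw [← measure_inter_add_diff (Γ ∪ (S2 ∪ S3)) hΓmeas]
      have h1 : (Γ ∪ (S2 ∪ S3)) ∩ Γ = Γ := Set.inter_eq_right.2 Set.subset_union_left
      have h2 : (Γ ∪ (S2 ∪ S3)) \ Γ = S2 ∪ S3 := by
        apply Set.Subset.antisymm
        · rintro x ⟨hx | hx, hxΓ⟩
          · exact absurd hx hxΓ
          · exact hx
        · intro x hx
          refine ⟨Or.inr hx, ?_⟩
          rcases hx with hx | hx
          · exact fun h => Set.disjoint_left.1 hdisj h (hS2Γ' hx)
          · exact fun h => hx.2 (Or.inl h)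
      rw [h1, h2, ← measure_inter_add_diff (S2 ∪ S3) hΓ'meas]
      have h3 : (S2 ∪ S3) ∩ Γ' = S2 := by
        apply Set.Subset.antisymm
        · rintro x ⟨hx | hx, hxΓ'⟩
          · exact hx
          · exact absurd (Or.inr hxΓ') hx.2
        · exact fun x hx => ⟨Or.inl hx, hS2Γ' hx⟩
      have h4 : (S2 ∪ S3) \ Γ' = S3 := by
        apply Set.Subset.antisymm
        · rintro x ⟨hx | hx, hxΓ'⟩
          · exact absurd (hS2Γ' hx) hxΓ'
          · exact hx
        · exact fun x hx => ⟨Or.inr hx, fun h => hx.2 (Or.inr h)⟩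
      have h5 : volume S2 = volume (Z ∩ Γ) := htrans _
      rw [h3, h4, h5]
    have hZbound : volume Z ≤ volume Γ + (volume (Z ∩ Γ) + volume S3) := by
      rw [← measure_inter_add_diff Z hΓmeas, ← measure_inter_add_diff (Z \ Γ) hΓ'meas]
      have e2 : (Z \ Γ) \ Γ' = S3 := by rw [Set.diff_diff]
      have e3 : volume ((Z \ Γ) ∩ Γ') ≤ volume Γ := by
        calc volume ((Z \ Γ) ∩ Γ') ≤ volume Γ' := measure_mono Set.inter_subset_right
          _ = volume Γ := by rw [hΓ'def]; exact htrans Γ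
      rw [e2]
      calc volume (Z ∩ Γ) + (volume ((Z \ Γ) ∩ Γ') + volume S3)
          ≤ volume (Z ∩ Γ) + (volume Γ + volume S3) :=
            add_le_add_right (add_le_add_left e3 _) _
        _ = volume Γ + (volume (Z ∩ Γ) + volume S3) := by ring
    calc ENNReal.ofReal m ≤ volume Z := hgm
      _ ≤ volume Γ + (volume (Z ∩ Γ) + volume S3) := hZbound
      _ = volume (Γ ∪ (S2 ∪ S3)) := hUeq
      _ ≤ volume {x ∈ D | gt x = 0} := measure_mono hUsub
  -- integrability of products with b
  haveI : IsFiniteMeasure (volume.restrict D) :=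
    ⟨by rw [Measure.restrict_apply_univ]; exact hDfin⟩
  obtain ⟨C, hC⟩ := hD.exists_bound_of_continuousOn hb
  have haesm_bD : AEStronglyMeasurable b (volume.restrict D) := hb.aestronglyMeasurable hDmeas
  have hgint_D : IntegrableOn g D volume := hgL2.integrable one_le_two
  have hgb_D : IntegrableOn (fun x => g x * b x) D volume := by
    have h := hgint_D.bdd_mul haesm_bD ((ae_restrict_mem hDmeas).mono fun x hx => hC x hx)
    exact h.congr (Filter.Eventually.of_forall fun x => mul_comm _ _)
  have hgb_Γ : IntegrableOn (fun x => g x * b x) Γ volume := hgb_D.mono_set hΓD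
  have hgb_Γ' : IntegrableOn (fun x => g x * b x) Γ' volume := hgb_D.mono_set hΓ'D
  have hgb_R : IntegrableOn (fun x => g x * b x) R volume := hgb_D.mono_set Set.diff_subset
  have hg_Γ : IntegrableOn g Γ volume := hgint_D.mono_set hΓD
  -- integrability of g x * b (x + τ) on Γ
  have haesm_bΓ' : AEStronglyMeasurable b (volume.restrict Γ') := haesm_bD.mono_measure hleΓ'
  have haesm_bshift : AEStronglyMeasurable (fun x => b (x + τ)) (volume.restrict Γ) := by
    have h := (hmpΓ.aestronglyMeasurable_comp_iff hemb).2 haesm_bΓ'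
    exact h
  have hbshift_bdd : ∀ᵐ x ∂volume.restrict Γ, ‖b (x + τ)‖ ≤ C :=
    (ae_restrict_mem hΓmeas).mono fun x hx => hC _ (hΓ'D ⟨x, hx, rfl⟩)
  have hgbτ_Γ : IntegrableOn (fun x => g x * b (x + τ)) Γ volume := by
    have h := hg_Γ.bdd_mul haesm_bshift hbshift_bdd
    exact h.congr (Filter.Eventually.of_forall fun x => mul_comm _ _)
  -- integrability of gt * b on pieces
  have hgtb_Γ : IntegrableOn (fun x => gt x * b x) Γ volume := by
    have h : (fun _ => (0 : ℝ)) =ᵐ[volume.restrict Γ] (fun x => gt x * b x) :=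
      hgtΓae.mono fun x hx => by simp [hx]
    exact (integrable_zero _ _ _).congr h
  have hgtb_Γ' : IntegrableOn (fun x => gt x * b x) Γ' volume := by
    have h1 : Integrable ((fun y => g y * b (y + τ)) ∘ (fun x : ℝ => x - τ))
        (volume.restrict Γ') := (hmpΓ'.integrable_comp_emb hembS).2 hgbτ_Γ
    refine h1.congr (hgtΓ'ae.mono fun x hx => ?_)
    simp only [Function.comp, sub_add_cancel]
    rw [hx]
  have hgtb_R : IntegrableOn (fun x => gt x * b x) R volume :=
    hgb_R.congr (hgtRae.mono fun x hx => by simp only [hx])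
  -- integral computations
  have eL : ∫ x in D, g x * b x = (∫ x in Γ, g x * b x) + ∫ x in R, g x * b x := by
    have e1 : ∫ x in Γ', g x * b x = 0 :=
      integral_eq_zero_of_ae (hgz.mono fun x hx => by simp [hx])
    rw [hsplit _ hgb_Γ hgb_Γ' hgb_R, e1, add_zero]
  have eR : ∫ x in D, gt x * b x = (∫ x in Γ, g x * b (x + τ)) + ∫ x in R, g x * b x := by
    have e0 : ∫ x in Γ, gt x * b x = 0 :=
      integral_eq_zero_of_ae (hgtΓae.mono fun x hx => by simp [hx])
    have e2 : ∫ x in Γ', gt x * b x = ∫ x in Γ, g x * b (x + τ) := by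
      have hcg : (fun x => gt x * b x) =ᵐ[volume.restrict Γ'] (fun x => g (x - τ) * b x) :=
        hgtΓ'ae.mono fun x hx => by simp only [hx]
      rw [integral_congr_ae hcg]
      have h := hmp.setIntegral_image_emb hemb (fun y => g (y - τ) * b y) Γ
      simpa only [add_sub_cancel_right] using h
    have e3 : ∫ x in R, gt x * b x = ∫ x in R, g x * b x :=
      integral_congr_ae (hgtRae.mono fun x hx => by simp only [hx])
    rw [hsplit _ hgtb_Γ hgtb_Γ' hgtb_R, e0, e2, e3, zero_add]
  -- strict inequality on Γ
  have hψint : IntegrableOn (fun x => g x * (b (x + τ) - b x)) Γ volume := by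
    have h := hgbτ_Γ.sub hgb_Γ
    have hcg : ((fun x => g x * b (x + τ)) - fun x => g x * b x) =ᵐ[volume.restrict Γ]
        (fun x => g x * (b (x + τ) - b x)) :=
      Filter.Eventually.of_forall fun x => by simp [Pi.sub_apply]; ring
    exact h.congr hcg
  have hbgap : ∀ x ∈ Γ, 0 < b (x + τ) - b x := by
    intro x hx
    have h1 : b x ≤ k := le_of_not_gt fun h => (hΓsub hx).2 ⟨hΓD hx, h⟩
    have h2 : k < b (x + τ) := (hτ ⟨x, hx, rfl⟩).2
    linarith
  have hψ0 : 0 ≤ᵐ[volume.restrict Γ] fun x => g x * (b (x + τ) - b x) := by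
    filter_upwards [h0Γ, ae_restrict_mem hΓmeas] with x h1 h2
    exact mul_nonneg h1 (le_of_lt (hbgap x h2))
  have hg0' : 0 ≤ᵐ[volume.restrict Γ] g := h0Γ
  have hsupp : 0 < volume (Function.support g ∩ Γ) :=
    (setIntegral_pos_iff_support_of_nonneg_ae hg0' hg_Γ).1 hgint
  have hsuppsub : Function.support g ∩ Γ ⊆
      Function.support (fun x => g x * (b (x + τ) - b x)) ∩ Γ := by
    rintro x ⟨hx1, hx2⟩
    exact ⟨mul_ne_zero hx1 (ne_of_gt (hbgap x hx2)), hx2⟩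
  have hψpos : 0 < ∫ x in Γ, g x * (b (x + τ) - b x) :=
    (setIntegral_pos_iff_support_of_nonneg_ae hψ0 hψint).2
      (lt_of_lt_of_le hsupp (measure_mono hsuppsub))
  have hψeq : ∫ x in Γ, g x * (b (x + τ) - b x)
      = (∫ x in Γ, g x * b (x + τ)) - ∫ x in Γ, g x * b x := by
    rw [← integral_sub hgbτ_Γ hgb_Γ]
    exact integral_congr_ae (Filter.Eventually.of_forall fun x => by ring)
  refine ⟨⟨hmemgt, ?_, hgt0, hZt⟩, ?_⟩
  · rw [hsq_eq]; exact hgnorm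
  · rw [eL, eR]
    have : ∫ x in Γ, g x * b x < ∫ x in Γ, g x * b (x + τ) := by linarith [hψpos, hψeq.symm]
    linarith
end
end

section
/- Let U, V ⊆ B be disjoint measurable sets with μ(U) > 0 and μ(V) > 0, and let f, h : D → ℝ be bounded measurable functions with f > 0 μ-a.e. on U, h > 0 μ-a.e. on V, and h ≤ w* μ-a.e. on V. Define g = w* + f·1_U − h·1_V. If ‖g‖_{L²(D)} ≤ 1, then ∫_D g b dμ < ∫_D w* b dμ = ‖b‖_{L²(B)}. -/
open MeasureTheory
open scoped ENNReal

noncomputable section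

/-- The candidate optimal weighting function `w*(x) = (b(x)/‖b‖_{L²(B)}) 1_B(x)`. -/
def wstarF (D : Set ℝ) (b : ℝ → ℝ) (k : ℝ) : ℝ → ℝ :=
  (Bf D b k).indicator fun x => b x / Real.sqrt (∫ y in Bf D b k, (b y) ^ 2)

lemma integrableOn_of_bound {D : Set ℝ} (hDm : MeasurableSet D) (hDfin : volume D < ⊤)
    (φ : ℝ → ℝ) (hmeas : AEStronglyMeasurable φ (volume.restrict D)) (C : ℝ)
    (hbd : ∀ x ∈ D, |φ x| ≤ C) : IntegrableOn φ D := by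
  refine Integrable.mono' (g := fun _ => C) ((integrableOn_const_iff).mpr (Or.inr hDfin)) hmeas ?_
  refine (ae_restrict_iff' hDm).mpr (Filter.Eventually.of_forall ?_)
  simpa [Real.norm_eq_abs] using hbd

/-- Perturbing `w*` by adding `f·1_U` and subtracting `h·1_V` on disjoint
positive-measure subsets `U, V ⊆ B` (with `f > 0` a.e. on `U`, `0 < h ≤ w*` a.e. on `V`)
while keeping `‖g‖_{L²(D)} ≤ 1` strictly decreases the objective:
`∫_D g b dμ < ∫_D w* b dμ = ‖b‖_{L²(B)}`. -/
theorem perturbation_decreases_objective (D : Set ℝ) (hD : IsCompact D)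
    (m : ℝ) (b : ℝ → ℝ)
    (hm : 0 < m) (hmD : ENNReal.ofReal m < volume D) (hDfin : volume D < ⊤)
    (hb : ContinuousOn b D)
    (hbpos : ∀ᵐ x ∂(volume.restrict D), 0 ≤ b x)
    (k : ℝ) (hk : 0 ≤ k)
    (hkm : volume (Bf D b k) = volume D - ENNReal.ofReal m)
    (hb2 : 0 < Real.sqrt (∫ y in Bf D b k, (b y) ^ 2))
    (U V : Set ℝ) (hUmeas : MeasurableSet U) (hVmeas : MeasurableSet V)
    (hUB : U ⊆ Bf D b k) (hVB : V ⊆ Bf D b k) (hUV : Disjoint U V)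
    (hUpos : 0 < volume U) (hVpos : 0 < volume V)
    (f h : ℝ → ℝ) (hfmeas : Measurable f) (hhmeas : Measurable h)
    (hfbd : ∃ C, ∀ x, |f x| ≤ C) (hhbd : ∃ C, ∀ x, |h x| ≤ C)
    (hfpos : ∀ᵐ x ∂(volume.restrict U), 0 < f x)
    (hhpos : ∀ᵐ x ∂(volume.restrict V), 0 < h x)
    (hhle : ∀ᵐ x ∂(volume.restrict V), h x ≤ wstarF D b k x)
    (g : ℝ → ℝ)
    (hg : g = fun x => wstarF D b k x + Set.indicator U f x - Set.indicator V h x)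
    (hgnorm : (∫ x in D, (g x) ^ 2) ≤ 1) :
    (∫ x in D, g x * b x) < ∫ x in D, wstarF D b k x * b x ∧
    (∫ x in D, wstarF D b k x * b x) = Real.sqrt (∫ y in Bf D b k, (b y) ^ 2) := by
  classical
  set T := ∫ y in Bf D b k, (b y) ^ 2 with hT
  set S := Real.sqrt T with hSdef
  have hS : 0 < S := hb2
  have hTpos : 0 < T := Real.sqrt_pos.mp hb2
  have hS2 : S ^ 2 = T := Real.sq_sqrt hTpos.le
  have hDm : MeasurableSet D := hD.measurableSet
  have hBD : Bf D b k ⊆ D := fun x hx => hx.1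
  have hUD : U ⊆ D := hUB.trans hBD
  have hVD : V ⊆ D := hVB.trans hBD
  set B := Bf D b k with hBdef
  have hBm : MeasurableSet B := by
    obtain ⟨u, hu, huD⟩ := continuousOn_iff'.mp hb (Set.Ioi k) isOpen_Ioi
    have hBe : B = u ∩ D := by
      rw [← huD]
      ext x
      simp only [hBdef, Bf, Set.mem_setOf_eq, Set.mem_inter_iff, Set.mem_preimage,
        Set.mem_Ioi]
      tauto
    rw [hBe]
    exact hu.measurableSet.inter hDm
  have hw : ∀ x, wstarF D b k x = B.indicator (fun x => b x / S) x := by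
    intro x
    simp only [wstarF, hSdef, hT, hBdef]
  -- boundedness of b on D
  obtain ⟨M, hM⟩ := hD.exists_bound_of_continuousOn hb
  have hDne : D.Nonempty := by
    refine nonempty_of_measure_ne_zero (μ := volume) ?_
    intro h0
    rw [h0] at hmD
    exact absurd hmD (by simp)
  have hM0 : 0 ≤ M := le_trans (abs_nonneg _) (by simpa [Real.norm_eq_abs] using hM _ hDne.choose_spec)
  obtain ⟨Cf, hCf⟩ := hfbd
  obtain ⟨Ch, hCh⟩ := hhbd
  have hCf0 : 0 ≤ Cf := le_trans (abs_nonneg _) (hCf 0)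
  have hCh0 : 0 ≤ Ch := le_trans (abs_nonneg _) (hCh 0)
  have hbM : ∀ x ∈ D, |b x| ≤ M := by simpa [Real.norm_eq_abs] using hM
  -- measurability
  have hbae : AEMeasurable b (volume.restrict D) := hb.aemeasurable hDm
  -- the pieces
  set q1 : ℝ → ℝ := B.indicator (fun x => b x ^ 2 / S) with hq1
  set q2 : ℝ → ℝ := U.indicator (fun x => f x * b x) with hq2
  set q3 : ℝ → ℝ := V.indicator (fun x => h x * b x) with hq3
  set r1 : ℝ → ℝ := B.indicator (fun x => b x ^ 2 / S ^ 2) with hr1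
  set r2 : ℝ → ℝ := U.indicator (fun x => f x ^ 2) with hr2
  set r3 : ℝ → ℝ := V.indicator (fun x => h x ^ 2) with hr3
  set r4 : ℝ → ℝ := U.indicator (fun x => f x * b x / S) with hr4
  set r5 : ℝ → ℝ := V.indicator (fun x => h x * b x / S) with hr5
  -- integrability of the pieces on D
  have hint_q1 : IntegrableOn q1 D := by
    refine integrableOn_of_bound hDm hDfin _
      ((((hbae.pow_const 2).div_const S).indicator hBm).aestronglyMeasurable) (M ^ 2 / S) ?_
    intro x hxD
    by_cases hxB : x ∈ B
    · simp only [hq1, Set.indicator_of_mem hxB]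
      rw [abs_div, abs_of_pos hS, abs_pow]
      exact (div_le_div_iff_of_pos_right hS).mpr (pow_le_pow_left₀ (abs_nonneg _) (hbM x hxD) 2)
    · simp only [hq1, Set.indicator_of_notMem hxB, abs_zero]
      positivity
  have hint_q2 : IntegrableOn q2 D := by
    refine integrableOn_of_bound hDm hDfin _
      (((hfmeas.aemeasurable.mul hbae).indicator hUmeas).aestronglyMeasurable) (Cf * M) ?_
    intro x hxD
    by_cases hxU : x ∈ U
    · simp only [hq2, Set.indicator_of_mem hxU]
      rw [abs_mul]
      exact mul_le_mul (hCf x) (hbM x hxD) (abs_nonneg _) hCf0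
    · simp only [hq2, Set.indicator_of_notMem hxU, abs_zero]
      exact mul_nonneg hCf0 hM0
  have hint_q3 : IntegrableOn q3 D := by
    refine integrableOn_of_bound hDm hDfin _
      (((hhmeas.aemeasurable.mul hbae).indicator hVmeas).aestronglyMeasurable) (Ch * M) ?_
    intro x hxD
    by_cases hxV : x ∈ V
    · simp only [hq3, Set.indicator_of_mem hxV]
      rw [abs_mul]
      exact mul_le_mul (hCh x) (hbM x hxD) (abs_nonneg _) hCh0
    · simp only [hq3, Set.indicator_of_notMem hxV, abs_zero]
      exact mul_nonneg hCh0 hM0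
  have hint_r1 : IntegrableOn r1 D := by
    refine integrableOn_of_bound hDm hDfin _
      ((((hbae.pow_const 2).div_const (S ^ 2)).indicator hBm).aestronglyMeasurable)
      (M ^ 2 / S ^ 2) ?_
    intro x hxD
    by_cases hxB : x ∈ B
    · simp only [hr1, Set.indicator_of_mem hxB]
      rw [abs_div, abs_of_pos (by positivity : (0:ℝ) < S ^ 2), abs_pow]
      exact (div_le_div_iff_of_pos_right (by positivity)).mpr (pow_le_pow_left₀ (abs_nonneg _) (hbM x hxD) 2)
    · simp only [hr1, Set.indicator_of_notMem hxB, abs_zero]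
      positivity
  have hint_r2 : IntegrableOn r2 D := by
    refine integrableOn_of_bound hDm hDfin _
      (((hfmeas.pow_const 2).aemeasurable.indicator hUmeas).aestronglyMeasurable) (Cf ^ 2) ?_
    intro x _
    by_cases hxU : x ∈ U
    · simp only [hr2, Set.indicator_of_mem hxU]
      rw [abs_pow]
      exact pow_le_pow_left₀ (abs_nonneg _) (hCf x) 2
    · simp only [hr2, Set.indicator_of_notMem hxU, abs_zero]
      positivity
  have hint_r3 : IntegrableOn r3 D := by
    refine integrableOn_of_bound hDm hDfin _
      (((hhmeas.pow_const 2).aemeasurable.indicator hVmeas).aestronglyMeasurable) (Ch ^ 2) ?_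
    intro x _
    by_cases hxV : x ∈ V
    · simp only [hr3, Set.indicator_of_mem hxV]
      rw [abs_pow]
      exact pow_le_pow_left₀ (abs_nonneg _) (hCh x) 2
    · simp only [hr3, Set.indicator_of_notMem hxV, abs_zero]
      positivity
  have hint_r4 : IntegrableOn r4 D := by
    refine integrableOn_of_bound hDm hDfin _
      ((((hfmeas.aemeasurable.mul hbae).div_const S).indicator hUmeas).aestronglyMeasurable)
      (Cf * M / S) ?_
    intro x hxD
    by_cases hxU : x ∈ U
    · simp only [hr4, Set.indicator_of_mem hxU]
      rw [abs_div, abs_of_pos hS, abs_mul]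
      exact (div_le_div_iff_of_pos_right hS).mpr (mul_le_mul (hCf x) (hbM x hxD) (abs_nonneg _) hCf0)
    · simp only [hr4, Set.indicator_of_notMem hxU, abs_zero]
      positivity
  have hint_r5 : IntegrableOn r5 D := by
    refine integrableOn_of_bound hDm hDfin _
      ((((hhmeas.aemeasurable.mul hbae).div_const S).indicator hVmeas).aestronglyMeasurable)
      (Ch * M / S) ?_
    intro x hxD
    by_cases hxV : x ∈ V
    · simp only [hr5, Set.indicator_of_mem hxV]
      rw [abs_div, abs_of_pos hS, abs_mul]
      exact (div_le_div_iff_of_pos_right hS).mpr (mul_le_mul (hCh x) (hbM x hxD) (abs_nonneg _) hCh0)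
    · simp only [hr5, Set.indicator_of_notMem hxV, abs_zero]
      positivity
  -- basic values of the integrals of the pieces
  have hq1int : ∫ x in D, q1 x = S := by
    rw [hq1, setIntegral_indicator hBm, Set.inter_eq_self_of_subset_right hBD,
      integral_div, ← hT, ← hS2]
    rw [sq]
    field_simp
  set A := ∫ x in U, f x * b x with hA
  set Cv := ∫ x in V, h x * b x with hCv
  set P := ∫ x in U, f x ^ 2 with hP
  set Q := ∫ x in V, h x ^ 2 with hQ
  have hq2int : ∫ x in D, q2 x = A := by
    rw [hq2, setIntegral_indicator hUmeas, Set.inter_eq_self_of_subset_right hUD, hA]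
  have hq3int : ∫ x in D, q3 x = Cv := by
    rw [hq3, setIntegral_indicator hVmeas, Set.inter_eq_self_of_subset_right hVD, hCv]
  have hr1int : ∫ x in D, r1 x = 1 := by
    rw [hr1, setIntegral_indicator hBm, Set.inter_eq_self_of_subset_right hBD,
      integral_div, ← hT, ← hS2, div_self (by positivity)]
  have hr2int : ∫ x in D, r2 x = P := by
    rw [hr2, setIntegral_indicator hUmeas, Set.inter_eq_self_of_subset_right hUD, hP]
  have hr3int : ∫ x in D, r3 x = Q := by
    rw [hr3, setIntegral_indicator hVmeas, Set.inter_eq_self_of_subset_right hVD, hQ]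
  have hr4int : ∫ x in D, r4 x = A / S := by
    rw [hr4, setIntegral_indicator hUmeas, Set.inter_eq_self_of_subset_right hUD,
      integral_div, hA]
  have hr5int : ∫ x in D, r5 x = Cv / S := by
    rw [hr5, setIntegral_indicator hVmeas, Set.inter_eq_self_of_subset_right hVD,
      integral_div, hCv]
  -- pointwise identities
  have hptw : ∀ x, wstarF D b k x * b x = q1 x := by
    intro x
    by_cases hxB : x ∈ B
    · simp only [hw, hq1, Set.indicator_of_mem hxB]
      ring
    · simp only [hw, hq1, Set.indicator_of_notMem hxB, zero_mul]
  have hws : (∫ x in D, wstarF D b k x * b x) = S := by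
    rw [show (fun x => wstarF D b k x * b x) = q1 from funext hptw] at *
    exact hq1int
  have hpt1 : ∀ x, g x * b x = q1 x + q2 x - q3 x := by
    intro x
    by_cases hxU : x ∈ U
    · have hxB : x ∈ B := hUB hxU
      have hxV : x ∉ V := Set.disjoint_left.mp hUV hxU
      simp only [hg, hw, hq1, hq2, hq3, Set.indicator_of_mem hxB, Set.indicator_of_mem hxU,
        Set.indicator_of_notMem hxV]
      ring
    · by_cases hxV : x ∈ V
      · have hxB : x ∈ B := hVB hxV
        simp only [hg, hw, hq1, hq2, hq3, Set.indicator_of_mem hxB, Set.indicator_of_mem hxV,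
          Set.indicator_of_notMem hxU]
        ring
      · by_cases hxB : x ∈ B
        · simp only [hg, hw, hq1, hq2, hq3, Set.indicator_of_mem hxB,
            Set.indicator_of_notMem hxU, Set.indicator_of_notMem hxV]
          ring
        · simp only [hg, hw, hq1, hq2, hq3, Set.indicator_of_notMem hxB,
            Set.indicator_of_notMem hxU, Set.indicator_of_notMem hxV]
          ring
  have hpt2 : ∀ x, g x ^ 2 = r1 x + r2 x + r3 x + 2 * r4 x - 2 * r5 x := by
    intro x
    by_cases hxU : x ∈ U
    · have hxB : x ∈ B := hUB hxU
      have hxV : x ∉ V := Set.disjoint_left.mp hUV hxU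
      simp only [hg, hw, hr1, hr2, hr3, hr4, hr5, Set.indicator_of_mem hxB,
        Set.indicator_of_mem hxU, Set.indicator_of_notMem hxV]
      ring
    · by_cases hxV : x ∈ V
      · have hxB : x ∈ B := hVB hxV
        simp only [hg, hw, hr1, hr2, hr3, hr4, hr5, Set.indicator_of_mem hxB,
          Set.indicator_of_mem hxV, Set.indicator_of_notMem hxU]
        ring
      · by_cases hxB : x ∈ B
        · simp only [hg, hw, hr1, hr2, hr3, hr4, hr5, Set.indicator_of_mem hxB,
            Set.indicator_of_notMem hxU, Set.indicator_of_notMem hxV]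
          ring
        · simp only [hg, hw, hr1, hr2, hr3, hr4, hr5, Set.indicator_of_notMem hxB,
            Set.indicator_of_notMem hxU, Set.indicator_of_notMem hxV]
          ring
  -- compute the two target integrals
  have hgb : (∫ x in D, g x * b x) = S + A - Cv := by
    calc (∫ x in D, g x * b x) = ∫ x in D, (q1 x + q2 x - q3 x) := by
          simp only [hpt1]
      _ = (∫ x in D, q1 x) + (∫ x in D, q2 x) - ∫ x in D, q3 x := by
          have h12 : IntegrableOn (fun x => q1 x + q2 x) D volume := hint_q1.add hint_q2
          rw [integral_sub h12 hint_q3, integral_add hint_q1 hint_q2]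
      _ = S + A - Cv := by rw [hq1int, hq2int, hq3int]
  have hgsq : (∫ x in D, g x ^ 2) = 1 + P + Q + 2 * (A / S) - 2 * (Cv / S) := by
    calc (∫ x in D, g x ^ 2)
        = ∫ x in D, (r1 x + r2 x + r3 x + 2 * r4 x - 2 * r5 x) := by
          simp only [hpt2]
      _ = (∫ x in D, r1 x) + (∫ x in D, r2 x) + (∫ x in D, r3 x)
            + 2 * (∫ x in D, r4 x) - 2 * (∫ x in D, r5 x) := by
          have h12 : IntegrableOn (fun x => r1 x + r2 x) D volume := hint_r1.add hint_r2
          have h13 : IntegrableOn (fun x => r1 x + r2 x + r3 x) D volume := h12.add hint_r3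
          have h54 : IntegrableOn (fun x => (2:ℝ) * r4 x) D volume := hint_r4.const_mul 2
          have h55 : IntegrableOn (fun x => (2:ℝ) * r5 x) D volume := hint_r5.const_mul 2
          have h14 : IntegrableOn (fun x => r1 x + r2 x + r3 x + 2 * r4 x) D volume :=
            h13.add h54
          rw [integral_sub h14 h55, integral_add h13 h54, integral_add h12 hint_r3,
            integral_add hint_r1 hint_r2, integral_const_mul, integral_const_mul]
      _ = 1 + P + Q + 2 * (A / S) - 2 * (Cv / S) := by
          rw [hr1int, hr2int, hr3int, hr4int, hr5int]
  -- positivity of P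
  have hPpos : 0 < P := by
    have hUfin : volume U < ⊤ := lt_of_le_of_lt (measure_mono hUD) hDfin
    have hintf2 : IntegrableOn (fun x => f x ^ 2) U := by
      refine integrableOn_of_bound hUmeas hUfin _ ((hfmeas.pow_const 2).aestronglyMeasurable)
        (Cf ^ 2) ?_
      intro x _
      rw [abs_pow]
      exact pow_le_pow_left₀ (abs_nonneg _) (hCf x) 2
    rw [hP, setIntegral_pos_iff_support_of_nonneg_ae
      (Filter.Eventually.of_forall fun x => sq_nonneg _) hintf2]
    set s := Function.support (fun x => f x ^ 2) with hs
    have hae : ∀ᵐ x ∂(volume.restrict U), x ∈ s := by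
      refine hfpos.mono fun x hx => ?_
      simp only [hs, Function.mem_support]
      positivity
    have h0 : volume.restrict U sᶜ = 0 := by
      simpa [mem_ae_iff] using hae
    have h0' : volume (sᶜ ∩ U) = 0 := by
      have hsm : MeasurableSet s := measurableSet_support (hfmeas.pow_const 2)
      rw [← Measure.restrict_apply hsm.compl]
      exact h0
    have : volume U ≤ volume (s ∩ U) + volume (sᶜ ∩ U) := by
      refine le_trans (measure_mono ?_) (measure_union_le _ _)
      intro x hx
      by_cases hxs : x ∈ s
      · exact Or.inl ⟨hxs, hx⟩
      · exact Or.inr ⟨hxs, hx⟩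
    rw [h0', add_zero] at this
    exact lt_of_lt_of_le hUpos this
  have hQnn : 0 ≤ Q := integral_nonneg fun x => sq_nonneg _
  -- conclude
  have hkey : A < Cv := by
    rw [hgsq] at hgnorm
    have hdiv : A / S < Cv / S := by linarith
    calc A = A / S * S := by field_simp
      _ < Cv / S * S := mul_lt_mul_of_pos_right hdiv hS
      _ = Cv := by field_simp
  refine ⟨?_, hws⟩
  rw [hgb, hws]
  linarith
end
end

section
/- Assume the function φ(t) = μ({x ∈ D : b(x) < t}) is continuous on ℝ. Then there exists k ≥ 0 with μ({x ∈ D : b(x) > k}) = μ(D) − m such that, with B = {x ∈ D : b(x) > k}, the function w*(x) = (b(x)/‖b‖_{L²(B)}) 1_B(x) is a solution of the functional sparse clustering problem: w* is feasible and ∫_D w* b dμ ≥ ∫_D g b dμ for every feasible g. -/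
open MeasureTheory
open scoped ENNReal

noncomputable section

lemma abs_mul_le_half (a c : ℝ) : ‖a * c‖ ≤ ‖(a ^ 2 + c ^ 2) / 2‖ := by
  rw [Real.norm_eq_abs, Real.norm_eq_abs, abs_mul]
  rw [abs_of_nonneg (by positivity : (0:ℝ) ≤ (a ^ 2 + c ^ 2) / 2)]
  nlinarith [sq_nonneg (|a| - |c|), sq_abs a, sq_abs c]

lemma rpow_two_eq (x : ℝ) : x ^ (2:ℝ) = x ^ 2 := by
  rw [show (2:ℝ) = ((2:ℕ):ℝ) by norm_num, Real.rpow_natCast]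

/-- Existence of a solution to functional sparse clustering: if the distribution
function `φ(t) = μ({x ∈ D : b(x) < t})` is continuous, then there is `k ≥ 0` with
`μ({x ∈ D : b(x) > k}) = μ(D) − m` such that `w* = (b/‖b‖_{L²(B)}) 1_B` is feasible
and maximizes `∫_D w b dμ` over all feasible `w`. -/
theorem functional_sparse_clustering_existence (D : Set ℝ) (hD : IsCompact D)
    (m : ℝ) (b : ℝ → ℝ)
    (hm : 0 < m) (hmD : ENNReal.ofReal m < volume D) (hDfin : volume D < ⊤)
    (hb : ContinuousOn b D)
    (hbpos : ∀ᵐ x ∂(volume.restrict D), 0 ≤ b x)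
    (hphi : Continuous fun t : ℝ => (volume {x ∈ D | b x < t}).toReal) :
    ∃ k : ℝ, 0 ≤ k ∧
      volume (Bf D b k) = volume D - ENNReal.ofReal m ∧
      FeasibleF D m (wstarF D b k) ∧
      ∀ g : ℝ → ℝ, FeasibleF D m g →
        (∫ x in D, g x * b x) ≤ ∫ x in D, wstarF D b k x * b x := by
  have hDmeas : MeasurableSet D := hD.measurableSet
  -- closedness / measurability of sublevel sets
  have hle_closed : ∀ k : ℝ, IsClosed {x ∈ D | b x ≤ k} := by
    intro k
    have h : {x ∈ D | b x ≤ k} = D ∩ b ⁻¹' Set.Iic k := rfl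
    rw [h]
    exact hb.preimage_isClosed_of_isClosed hD.isClosed isClosed_Iic
  have hge_closed : ∀ k : ℝ, IsClosed {x ∈ D | k ≤ b x} := by
    intro k
    have h : {x ∈ D | k ≤ b x} = D ∩ b ⁻¹' Set.Ici k := rfl
    rw [h]
    exact hb.preimage_isClosed_of_isClosed hD.isClosed isClosed_Ici
  have mle : ∀ k : ℝ, MeasurableSet {x ∈ D | b x ≤ k} :=
    fun k => (hle_closed k).measurableSet
  have mlt : ∀ t : ℝ, MeasurableSet {x ∈ D | b x < t} := by
    intro t
    have h : {x ∈ D | b x < t} = D \ {x ∈ D | t ≤ b x} := by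
      ext x
      simp only [Set.mem_setOf_eq, Set.mem_diff, not_and, not_le]
      constructor
      · rintro ⟨h1, h2⟩; exact ⟨h1, fun _ => h2⟩
      · rintro ⟨h1, h2⟩; exact ⟨h1, h2 h1⟩
    rw [h]
    exact hDmeas.diff (hge_closed t).measurableSet
  have hBfeq : ∀ k : ℝ, Bf D b k = D \ {x ∈ D | b x ≤ k} := by
    intro k; ext x
    simp only [Bf, Set.mem_setOf_eq, Set.mem_diff, not_and, not_le]
    constructor
    · rintro ⟨h1, h2⟩; exact ⟨h1, fun _ => h2⟩
    · rintro ⟨h1, h2⟩; exact ⟨h1, h2 h1⟩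
  have hBf_meas : ∀ k : ℝ, MeasurableSet (Bf D b k) := by
    intro k; rw [hBfeq k]; exact hDmeas.diff (mle k)
  have hBf_sub : ∀ k : ℝ, Bf D b k ⊆ D := fun k x hx => hx.1
  -- μ({x ∈ D | b x < 0}) = 0
  have hb0 : volume {x ∈ D | b x < 0} = 0 := by
    have h := ae_iff.mp hbpos
    rw [Measure.restrict_apply' hDmeas] at h
    refine measure_mono_null ?_ h
    intro x hx
    exact ⟨not_le.mpr hx.2, hx.1⟩
  -- there is a point of D where b is nonnegative
  have hex : ∃ x ∈ D, 0 ≤ b x := by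
    by_contra h
    push_neg at h
    have hDz : volume D = 0 := by
      refine measure_mono_null (fun x hx => ?_) hb0
      exact ⟨hx, h x hx⟩
    rw [hDz] at hmD
    exact absurd hmD (by simp)
  have hDne : D.Nonempty := ⟨hex.choose, hex.choose_spec.1⟩
  obtain ⟨x₀, hx₀D, hx₀⟩ := hD.exists_isMaxOn hDne hb
  set M := b x₀ with hM
  have hM0 : 0 ≤ M := le_trans hex.choose_spec.2 (hx₀ hex.choose_spec.1)
  set φ : ℝ → ℝ := fun t => (volume {x ∈ D | b x < t}).toReal with hφ
  -- values of φ at the endpoints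
  have hφ0 : φ 0 = 0 := by simp [hφ, hb0]
  have hφM : φ (M + 1) = (volume D).toReal := by
    have h : {x ∈ D | b x < M + 1} = D := by
      ext x
      simp only [Set.mem_setOf_eq, and_iff_left_iff_imp]
      intro hx
      exact lt_of_le_of_lt (hx₀ hx) (by linarith)
    simp [hφ, h]
  have hmle : m ≤ (volume D).toReal :=
    (ENNReal.ofReal_le_iff_le_toReal hDfin.ne).mp hmD.le
  -- intermediate value theorem
  have hmmem : m ∈ Set.Icc (φ 0) (φ (M + 1)) := by
    rw [hφ0, hφM]; exact ⟨hm.le, hmle⟩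
  obtain ⟨k, hkmem, hφk⟩ :=
    intermediate_value_Icc (by linarith : (0:ℝ) ≤ M + 1) hphi.continuousOn hmmem
  have hk0 : 0 ≤ k := hkmem.1
  -- μ({x ∈ D | b x ≤ k}) = ofReal m
  have hfin_le : volume {x ∈ D | b x ≤ k} < ⊤ :=
    lt_of_le_of_lt (measure_mono fun x hx => hx.1) hDfin
  have hle_vol : volume {x ∈ D | b x ≤ k} = ENNReal.ofReal m := by
    set A : ℕ → Set ℝ := fun n => {x ∈ D | b x < k + 1 / (n + 1)} with hA
    have hAanti : Antitone A := by
      intro i j hij x hx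
      refine ⟨hx.1, lt_of_lt_of_le hx.2 ?_⟩
      have h1 : (0:ℝ) < i + 1 := by positivity
      have h2 : (i:ℝ) + 1 ≤ (j:ℝ) + 1 := by
        have := (Nat.cast_le (α := ℝ)).mpr hij; linarith
      have := one_div_le_one_div_of_le h1 h2
      linarith
    have hAinter : ⋂ n, A n = {x ∈ D | b x ≤ k} := by
      ext x
      simp only [Set.mem_iInter, hA, Set.mem_setOf_eq]
      constructor
      · intro h
        refine ⟨(h 0).1, ?_⟩
        by_contra hlt
        push_neg at hlt
        obtain ⟨n, hn⟩ := exists_nat_one_div_lt (by linarith : 0 < b x - k)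
        have := (h n).2
        linarith
      · intro h n
        refine ⟨h.1, lt_of_le_of_lt h.2 ?_⟩
        have : (0:ℝ) < 1 / (n + 1) := by positivity
        linarith
    have ht1 : Filter.Tendsto (fun n : ℕ => volume (A n)) Filter.atTop
        (nhds (volume {x ∈ D | b x ≤ k})) := by
      rw [← hAinter]
      exact tendsto_measure_iInter_atTop
        (fun n => (mlt _).nullMeasurableSet) hAanti
        ⟨0, (lt_of_le_of_lt (measure_mono fun x hx => hx.1) hDfin).ne⟩
    have ht3 : Filter.Tendsto (fun n : ℕ => (volume (A n)).toReal) Filter.atTop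
        (nhds (volume {x ∈ D | b x ≤ k}).toReal) :=
      (ENNReal.tendsto_toReal hfin_le.ne).comp ht1
    have ht2 : Filter.Tendsto (fun n : ℕ => (volume (A n)).toReal) Filter.atTop (nhds m) := by
      have htk : Filter.Tendsto (fun n : ℕ => k + 1 / ((n:ℝ) + 1)) Filter.atTop (nhds k) := by
        have := tendsto_one_div_add_atTop_nhds_zero_nat (𝕜 := ℝ)
        have h := Filter.Tendsto.const_add k this
        simpa using h
      have := (hphi.tendsto k).comp htk
      rw [hφk] at this
      exact this
    have := tendsto_nhds_unique ht3 ht2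
    rw [← this, ENNReal.ofReal_toReal hfin_le.ne]
  -- the measure of Bf
  have hBf_vol : volume (Bf D b k) = volume D - ENNReal.ofReal m := by
    rw [hBfeq k, measure_diff (fun x hx => hx.1) (mle k).nullMeasurableSet hfin_le.ne, hle_vol]
  have hBf_pos : 0 < volume (Bf D b k) := by
    rw [hBf_vol]
    exact tsub_pos_iff_lt.mpr hmD
  have hBf_fin : volume (Bf D b k) < ⊤ :=
    lt_of_le_of_lt (measure_mono (hBf_sub k)) hDfin
  -- integrability of b²
  have hb2cont : ContinuousOn (fun x => b x ^ 2) D := hb.pow 2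
  have hb2int : IntegrableOn (fun x => b x ^ 2) D := hb2cont.integrableOn_compact hD
  have hb2intB : IntegrableOn (fun x => b x ^ 2) (Bf D b k) := hb2int.mono_set (hBf_sub k)
  set I := ∫ y in Bf D b k, b y ^ 2 with hI
  have hI_pos : 0 < I := by
    rw [hI, setIntegral_pos_iff_support_of_nonneg_ae
      (Filter.Eventually.of_forall fun x => sq_nonneg (b x)) hb2intB]
    refine lt_of_lt_of_le hBf_pos (measure_mono fun x hx => ⟨?_, hx⟩)
    have hbx : 0 < b x := lt_of_le_of_lt hk0 hx.2
    simp only [Function.mem_support]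
    positivity
  set N := Real.sqrt I with hN
  have hN_pos : 0 < N := Real.sqrt_pos.mpr hI_pos
  have hNsq : N ^ 2 = I := Real.sq_sqrt hI_pos.le
  have hws : wstarF D b k = (Bf D b k).indicator fun x => b x / N := rfl
  -- finiteness of restricted measure
  haveI hfinD : IsFiniteMeasure (volume.restrict D) :=
    ⟨by rwa [Measure.restrict_apply_univ]⟩
  -- MemLp of b
  have hbsm : AEStronglyMeasurable b (volume.restrict D) := hb.aestronglyMeasurable hDmeas
  obtain ⟨C, hC⟩ := hD.exists_bound_of_continuousOn hb
  have hbmem : MemLp b 2 (volume.restrict D) :=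
    MemLp.of_bound hbsm C ((ae_restrict_iff' hDmeas).mpr (Filter.Eventually.of_forall hC))
  -- feasibility of wstar
  have hwmem : MemLp (wstarF D b k) 2 (volume.restrict D) := by
    rw [hws]
    have h := (hbmem.const_mul N⁻¹).indicator (hBf_meas k)
    have he : ((Bf D b k).indicator fun x => N⁻¹ * b x)
        = (Bf D b k).indicator fun x => b x / N := by
      funext x
      by_cases hx : x ∈ Bf D b k <;>
        simp [Set.indicator_of_mem, Set.indicator_of_notMem, hx, div_eq_inv_mul]
    rwa [he] at h
  have hwsq : (∫ x in D, (wstarF D b k x) ^ 2) = 1 := by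
    have hsq : ∀ x, (wstarF D b k x) ^ 2
        = (Bf D b k).indicator (fun x => b x ^ 2 / N ^ 2) x := by
      intro x
      rw [hws]
      by_cases hx : x ∈ Bf D b k <;>
        simp [Set.indicator_of_mem, Set.indicator_of_notMem, hx, div_pow]
    simp_rw [hsq]
    rw [setIntegral_indicator (hBf_meas k),
      Set.inter_eq_self_of_subset_right (hBf_sub k), integral_div, hNsq]
    exact div_self hI_pos.ne'
  have hwpos : ∀ x, 0 ≤ wstarF D b k x := by
    intro x
    rw [hws]
    by_cases hx : x ∈ Bf D b k
    · rw [Set.indicator_of_mem hx]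
      exact div_nonneg (le_of_lt (lt_of_le_of_lt hk0 hx.2)) hN_pos.le
    · rw [Set.indicator_of_notMem hx]
  have hwzero : ENNReal.ofReal m ≤ volume {x ∈ D | wstarF D b k x = 0} := by
    rw [← hle_vol]
    refine measure_mono fun x hx => ⟨hx.1, ?_⟩
    rw [hws, Set.indicator_of_notMem]
    intro hmem
    exact absurd hx.2 (not_le.mpr hmem.2)
  refine ⟨k, hk0, hBf_vol, ⟨hwmem, le_of_eq hwsq, Filter.Eventually.of_forall hwpos, hwzero⟩, ?_⟩
  -- optimality
  intro g hg
  obtain ⟨hg1, hg2, hg3, hg4⟩ := hg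
  -- the value of the RHS is N
  have hrhs : ∫ x in D, wstarF D b k x * b x = N := by
    have hmul : ∀ x, wstarF D b k x * b x
        = (Bf D b k).indicator (fun y => b y ^ 2 / N) x := by
      intro x
      rw [hws]
      by_cases hx : x ∈ Bf D b k
      · rw [Set.indicator_of_mem hx, Set.indicator_of_mem hx, pow_two]
        ring
      · rw [Set.indicator_of_notMem hx, Set.indicator_of_notMem hx, zero_mul]
    simp_rw [hmul]
    rw [setIntegral_indicator (hBf_meas k),
      Set.inter_eq_self_of_subset_right (hBf_sub k), integral_div, ← hI, hN, Real.div_sqrt]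
  rw [hrhs]
  -- measurable representative of g
  set g' := hg1.1.mk g with hg'
  have hgsm : StronglyMeasurable g' := hg1.1.stronglyMeasurable_mk
  have hgg' : g =ᵐ[volume.restrict D] g' := hg1.1.ae_eq_mk
  have hg'mem : MemLp g' 2 (volume.restrict D) := hg1.ae_eq hgg'
  -- the vanishing set of g' is large
  have hnull : volume ({x | ¬ g x = g' x} ∩ D) = 0 := by
    have h := hgg'
    rw [Filter.EventuallyEq, ae_iff, Measure.restrict_apply' hDmeas] at h
    exact h
  have hae : ∀ᵐ x ∂(volume : Measure ℝ), x ∉ ({x | ¬ g x = g' x} ∩ D) := by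
    rw [ae_iff]
    convert hnull using 2
    ext x
    simp
  have hZeq : volume {x ∈ D | g x = 0} = volume {x ∈ D | g' x = 0} := by
    apply measure_congr
    filter_upwards [hae] with x hx
    simp only [Set.mem_inter_iff, Set.mem_setOf_eq, not_and] at hx
    simp only [eq_iff_iff, Set.mem_setOf_eq]
    constructor
    · rintro ⟨hxD, h0⟩
      refine ⟨hxD, ?_⟩
      by_cases hgx : g x = g' x
      · rw [← hgx]; exact h0
      · exact absurd hxD (hx hgx)
    · rintro ⟨hxD, h0⟩
      refine ⟨hxD, ?_⟩
      by_cases hgx : g x = g' x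
      · rw [hgx]; exact h0
      · exact absurd hxD (hx hgx)
  have hZ'm : ENNReal.ofReal m ≤ volume {x ∈ D | g' x = 0} := hZeq ▸ hg4
  -- the support set A
  set A : Set ℝ := {x ∈ D | g' x ≠ 0} with hAdef
  have hZmeas : MeasurableSet {x | g' x = 0} :=
    hgsm.measurable (measurableSet_singleton 0)
  have hAmeas : MeasurableSet A := hDmeas.inter hZmeas.compl
  have hAsub : A ⊆ D := fun x hx => hx.1
  have hZDmeas : MeasurableSet {x ∈ D | g' x = 0} := hDmeas.inter hZmeas
  have hA_le : volume A ≤ volume (Bf D b k) := by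
    rw [hBf_vol]
    have hU : A ∪ {x ∈ D | g' x = 0} = D := by
      ext x
      simp only [Set.mem_union, hAdef, Set.mem_setOf_eq]
      constructor
      · rintro (h | h) <;> exact h.1
      · intro hxD
        by_cases h : g' x = 0
        · exact Or.inr ⟨hxD, h⟩
        · exact Or.inl ⟨hxD, h⟩
    have hdisj : Disjoint A {x ∈ D | g' x = 0} := by
      rw [Set.disjoint_left]
      rintro x ⟨_, hx⟩ ⟨_, hx'⟩
      exact hx hx'
    have hsplit : volume A + volume {x ∈ D | g' x = 0} = volume D := by
      rw [← measure_union hdisj hZDmeas, hU]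
    refine ENNReal.le_sub_of_add_le_right ENNReal.ofReal_ne_top ?_
    calc volume A + ENNReal.ofReal m ≤ volume A + volume {x ∈ D | g' x = 0} :=
          add_le_add le_rfl hZ'm
      _ = volume D := hsplit
  -- the bathtub inequality : ∫_A b² ≤ ∫_B b²
  have hbathtub : (∫ x in A, b x ^ 2) ≤ ∫ x in Bf D b k, b x ^ 2 := by
    set B := Bf D b k with hB
    have hABfin : volume (A \ B) < ⊤ :=
      lt_of_le_of_lt (measure_mono (fun x hx => hAsub hx.1)) hDfin
    have hBAfin : volume (B \ A) < ⊤ :=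
      lt_of_le_of_lt (measure_mono (fun x hx => (hBf_sub k) hx.1)) hDfin
    -- measure comparison of the two "wings"
    have hmeaswing : volume (A \ B) ≤ volume (B \ A) := by
      have h1 : volume (A ∩ B) + volume (A \ B) = volume A :=
        measure_inter_add_diff A (hBf_meas k)
      have h2 : volume (B ∩ A) + volume (B \ A) = volume B :=
        measure_inter_add_diff B hAmeas
      have hint : volume (A ∩ B) = volume (B ∩ A) := by rw [Set.inter_comm]
      have hintfin : volume (A ∩ B) ≠ ⊤ :=
        (lt_of_le_of_lt (measure_mono fun x hx => hAsub hx.1) hDfin).ne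
      have : volume (A ∩ B) + volume (A \ B) ≤ volume (A ∩ B) + volume (B \ A) := by
        rw [h1]
        calc volume A ≤ volume B := hA_le
          _ = volume (B ∩ A) + volume (B \ A) := h2.symm
          _ = volume (A ∩ B) + volume (B \ A) := by rw [hint]
      exact (ENNReal.add_le_add_iff_left hintfin).mp this
    -- on A \ B, b² ≤ k² (a.e.)
    have hwing1 : (∫ x in A \ B, b x ^ 2) ≤ k ^ 2 * (volume (A \ B)).toReal := by
      have hmono : (∫ x in A \ B, b x ^ 2) ≤ ∫ _x in A \ B, k ^ 2 := by
        refine integral_mono_ae (hb2int.mono_set fun x hx => hAsub hx.1)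
          (integrableOn_const hABfin.ne) ?_
        have hmem := ae_restrict_mem (μ := volume) (hAmeas.diff (hBf_meas k))
        have hpos : ∀ᵐ x ∂(volume.restrict (A \ B)), 0 ≤ b x :=
          ae_restrict_of_ae_restrict_of_subset (fun x hx => hAsub hx.1) hbpos
        filter_upwards [hmem, hpos] with x hx hx0
        have hxB : b x ≤ k := by
          by_contra hcon
          push_neg at hcon
          exact hx.2 ⟨hAsub hx.1, hcon⟩
        exact pow_le_pow_left₀ hx0 hxB 2
      rwa [setIntegral_const, smul_eq_mul, mul_comm] at hmono
    -- on B \ A, k² ≤ b²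
    have hwing2 : k ^ 2 * (volume (B \ A)).toReal ≤ ∫ x in B \ A, b x ^ 2 := by
      have hmono : (∫ _x in B \ A, k ^ 2) ≤ ∫ x in B \ A, b x ^ 2 := by
        refine setIntegral_mono_on (integrableOn_const hBAfin.ne)
          (hb2int.mono_set fun x hx => (hBf_sub k) hx.1)
          ((hBf_meas k).diff hAmeas) ?_
        intro x hx
        exact pow_le_pow_left₀ hk0 (le_of_lt hx.1.2) 2
      rwa [setIntegral_const, smul_eq_mul, mul_comm] at hmono
    have hwings : (∫ x in A \ B, b x ^ 2) ≤ ∫ x in B \ A, b x ^ 2 := by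
      calc (∫ x in A \ B, b x ^ 2) ≤ k ^ 2 * (volume (A \ B)).toReal := hwing1
        _ ≤ k ^ 2 * (volume (B \ A)).toReal := by
            exact mul_le_mul_of_nonneg_left
              (ENNReal.toReal_le_toReal hABfin.ne hBAfin.ne |>.mpr hmeaswing) (sq_nonneg k)
        _ ≤ ∫ x in B \ A, b x ^ 2 := hwing2
    have hsplitA : (∫ x in A ∩ B, b x ^ 2) + (∫ x in A \ B, b x ^ 2) = ∫ x in A, b x ^ 2 :=
      integral_inter_add_diff (hBf_meas k) (hb2int.mono_set hAsub)
    have hsplitB : (∫ x in B ∩ A, b x ^ 2) + (∫ x in B \ A, b x ^ 2) = ∫ x in B, b x ^ 2 :=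
      integral_inter_add_diff hAmeas hb2intB
    have hic : (∫ x in A ∩ B, b x ^ 2) = ∫ x in B ∩ A, b x ^ 2 := by rw [Set.inter_comm]
    linarith
  -- reduce the LHS integral to A
  have hg'b_int : IntegrableOn (fun x => g' x * b x) D := by
    refine Integrable.mono ((hg'mem.integrable_sq.add hbmem.integrable_sq).div_const 2)
      (hgsm.aestronglyMeasurable.mul hbsm) ?_
    refine Filter.Eventually.of_forall fun x => ?_
    exact abs_mul_le_half (g' x) (b x)
  have hDA : (∫ x in D, g' x * b x) = ∫ x in A, g' x * b x := by
    have h1 : (∫ x in D ∩ A, g' x * b x) + (∫ x in D \ A, g' x * b x)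
        = ∫ x in D, g' x * b x := integral_inter_add_diff hAmeas hg'b_int
    have h2 : (∫ x in D \ A, g' x * b x) = 0 := by
      refine setIntegral_eq_zero_of_forall_eq_zero fun x hx => ?_
      have : g' x = 0 := by
        by_contra hcon
        exact hx.2 ⟨hx.1, hcon⟩
      rw [this, zero_mul]
    have h3 : D ∩ A = A := Set.inter_eq_self_of_subset_right hAsub
    rw [← h1, h2, h3, add_zero]
  have hgg'int : (∫ x in D, g x * b x) = ∫ x in D, g' x * b x :=
    integral_congr_ae (hgg'.mul (Filter.EventuallyEq.refl _ b))
  -- Cauchy-Schwarz on A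
  have hg'posA : ∀ᵐ x ∂(volume.restrict A), 0 ≤ g' x := by
    have h : ∀ᵐ x ∂(volume.restrict A), 0 ≤ g x ∧ g x = g' x :=
      ae_restrict_of_ae_restrict_of_subset hAsub (hg3.and hgg')
    filter_upwards [h] with x hx
    rw [← hx.2]
    exact hx.1
  have hbposA : ∀ᵐ x ∂(volume.restrict A), 0 ≤ b x :=
    ae_restrict_of_ae_restrict_of_subset hAsub hbpos
  have hg'memA : MemLp g' (ENNReal.ofReal 2) (volume.restrict A) := by
    rw [ENNReal.ofReal_ofNat]
    exact hg'mem.mono_measure (Measure.restrict_mono hAsub le_rfl)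
  have hbmemA : MemLp b (ENNReal.ofReal 2) (volume.restrict A) := by
    rw [ENNReal.ofReal_ofNat]
    exact hbmem.mono_measure (Measure.restrict_mono hAsub le_rfl)
  have hCS := integral_mul_le_Lp_mul_Lq_of_nonneg
    Real.HolderConjugate.two_two hg'posA hbposA hg'memA hbmemA
  -- rewrite rpow into pow and sqrt
  have hCS' : (∫ x in A, g' x * b x)
      ≤ Real.sqrt (∫ x in A, g' x ^ 2) * Real.sqrt (∫ x in A, b x ^ 2) := by
    have e1 : (∫ x in A, g' x ^ (2:ℝ)) = ∫ x in A, g' x ^ 2 := by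
      simp_rw [rpow_two_eq]
    have e2 : (∫ x in A, b x ^ (2:ℝ)) = ∫ x in A, b x ^ 2 := by
      simp_rw [rpow_two_eq]
    rw [e1, e2] at hCS
    rw [Real.sqrt_eq_rpow, Real.sqrt_eq_rpow]
    exact hCS
  -- bound the two factors
  have hg'sqD : (∫ x in D, g' x ^ 2) ≤ 1 := by
    have he : (∫ x in D, g' x ^ 2) = ∫ x in D, g x ^ 2 := by
      refine integral_congr_ae ?_
      filter_upwards [hgg'] with x hx
      rw [hx]
    rw [he]
    exact hg2
  have hg'sqA : (∫ x in A, g' x ^ 2) ≤ ∫ x in D, g' x ^ 2 := by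
    refine setIntegral_mono_set hg'mem.integrable_sq
      (Filter.Eventually.of_forall fun x => sq_nonneg (g' x))
      (HasSubset.Subset.eventuallyLE hAsub)
  have hfac1 : Real.sqrt (∫ x in A, g' x ^ 2) ≤ 1 := by
    rw [show (1:ℝ) = Real.sqrt 1 by rw [Real.sqrt_one]]
    exact Real.sqrt_le_sqrt (le_trans hg'sqA hg'sqD)
  have hfac2 : Real.sqrt (∫ x in A, b x ^ 2) ≤ N := by
    rw [hN, hI]
    exact Real.sqrt_le_sqrt hbathtub
  have hsqA_nonneg : 0 ≤ Real.sqrt (∫ x in A, b x ^ 2) := Real.sqrt_nonneg _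
  calc (∫ x in D, g x * b x) = ∫ x in A, g' x * b x := by rw [hgg'int, hDA]
    _ ≤ Real.sqrt (∫ x in A, g' x ^ 2) * Real.sqrt (∫ x in A, b x ^ 2) := hCS'
    _ ≤ 1 * N := by
        exact mul_le_mul hfac1 hfac2 hsqA_nonneg zero_le_one
    _ = N := one_mul N
end
end

section
/- Assume the function φ(t) = μ({x ∈ D : b(x) < t}) is continuous on ℝ, and let k ≥ 0 satisfy μ({x ∈ D : b(x) > k}) = μ(D) − m, with B = {x ∈ D : b(x) > k} and w*(x) = (b(x)/‖b‖_{L²(B)}) 1_B(x). Then the solution of the functional sparse clustering problem is μ-a.e. unique: every feasible g with ∫_D g b dμ = ∫_D w* b dμ satisfies g = w* μ-a.e. -/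
open MeasureTheory
open scoped ENNReal

noncomputable section

/-- Relatively open subsets of a measurable set are measurable. -/
private lemma measSep {D : Set ℝ} (hDm : MeasurableSet D) {b : ℝ → ℝ}
    (hb : ContinuousOn b D) {U : Set ℝ} (hU : IsOpen U) :
    MeasurableSet {x ∈ D | b x ∈ U} := by
  have hres : Continuous (D.restrict b) := continuousOn_iff_continuous_restrict.mp hb
  have h2 : MeasurableSet (D.restrict b ⁻¹' U) := (hU.preimage hres).measurableSet
  have hset : {x ∈ D | b x ∈ U} = (fun x : D => (x : ℝ)) '' (D.restrict b ⁻¹' U) := by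
    ext x
    constructor
    · rintro ⟨hxD, hxU⟩
      exact ⟨⟨x, hxD⟩, hxU, rfl⟩
    · rintro ⟨⟨y, hy⟩, hyU, rfl⟩
      exact ⟨hy, hyU⟩
  rw [hset]
  exact (MeasurableEmbedding.subtype_coe hDm).measurableSet_image.mpr h2

/-- If the distribution function of `b` is continuous, level sets of `b` in `D` are null. -/
private lemma levelNull {D : Set ℝ} (hDm : MeasurableSet D) (hDfin : volume D < ⊤)
    {b : ℝ → ℝ} (hb : ContinuousOn b D)
    (hphi : Continuous fun t : ℝ => (volume {x ∈ D | b x < t}).toReal)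
    (k : ℝ) : volume {x ∈ D | b x = k} = 0 := by
  set E : ℕ → Set ℝ := fun n => {x ∈ D | b x < k + 1 / (n + 1)} with hE
  have hEmeas : ∀ n, MeasurableSet (E n) := fun n => measSep hDm hb isOpen_Iio
  have hanti : Antitone E := by
    intro n m' hnm x hx
    refine ⟨hx.1, lt_of_lt_of_le hx.2 ?_⟩
    have hc : (n : ℝ) + 1 ≤ (m' : ℝ) + 1 := by exact_mod_cast Nat.succ_le_succ hnm
    have : (1 : ℝ) / (m' + 1) ≤ 1 / (n + 1) := one_div_le_one_div_of_le (by positivity) hc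
    linarith
  have hInter : (⋂ n, E n) = {x ∈ D | b x ≤ k} := by
    ext x
    simp only [Set.mem_iInter, hE, Set.mem_setOf_eq]
    constructor
    · intro h
      refine ⟨(h 0).1, ?_⟩
      by_contra hlt
      push_neg at hlt
      obtain ⟨n, hn⟩ := exists_nat_one_div_lt (sub_pos.mpr hlt)
      exact absurd (h n).2 (by push_neg; linarith)
    · rintro ⟨hxD, hle⟩ n
      exact ⟨hxD, lt_of_le_of_lt hle (lt_add_of_pos_right k (by positivity))⟩
  have hfin1 : volume {x ∈ D | b x ≤ k} ≠ ⊤ :=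
    (lt_of_le_of_lt (measure_mono fun x hx => hx.1) hDfin).ne
  have hfin2 : volume {x ∈ D | b x < k} ≠ ⊤ :=
    (lt_of_le_of_lt (measure_mono fun x hx => hx.1) hDfin).ne
  have htend : Filter.Tendsto (fun n => volume (E n)) Filter.atTop
      (nhds (volume (⋂ n, E n))) :=
    tendsto_measure_iInter_atTop (fun n => (hEmeas n).nullMeasurableSet) hanti
      ⟨0, (lt_of_le_of_lt (measure_mono fun x hx => hx.1) hDfin).ne⟩
  rw [hInter] at htend
  have h1 : Filter.Tendsto (fun n => (volume (E n)).toReal) Filter.atTop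
      (nhds ((volume {x ∈ D | b x ≤ k}).toReal)) :=
    (ENNReal.tendsto_toReal hfin1).comp htend
  have hk2 : Filter.Tendsto (fun n : ℕ => k + 1 / ((n : ℝ) + 1)) Filter.atTop (nhds k) := by
    simpa using (tendsto_const_nhds (x := k) (f := Filter.atTop (α := ℕ))).add
      tendsto_one_div_add_atTop_nhds_zero_nat
  have h2 : Filter.Tendsto (fun n => (volume (E n)).toReal) Filter.atTop
      (nhds ((volume {x ∈ D | b x < k}).toReal)) := by
    have := (hphi.tendsto k).comp hk2
    exact this
  have heqR : (volume {x ∈ D | b x ≤ k}).toReal = (volume {x ∈ D | b x < k}).toReal :=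
    tendsto_nhds_unique h1 h2
  have heqE : volume {x ∈ D | b x ≤ k} = volume {x ∈ D | b x < k} :=
    (ENNReal.toReal_eq_toReal_iff' hfin1 hfin2).mp heqR
  have hdiff : {x ∈ D | b x = k} = {x ∈ D | b x ≤ k} \ {x ∈ D | b x < k} := by
    ext x
    constructor
    · rintro ⟨hxD, hbk⟩
      exact ⟨⟨hxD, hbk.le⟩, fun h => absurd h.2 (by rw [hbk]; exact lt_irrefl k)⟩
    · rintro ⟨⟨hxD, hle⟩, hnot⟩
      exact ⟨hxD, le_antisymm hle (not_lt.mp fun h => hnot ⟨hxD, h⟩)⟩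
  have hmlt : MeasurableSet {x ∈ D | b x < k} := measSep hDm hb isOpen_Iio
  have hsubset : {x ∈ D | b x < k} ⊆ {x ∈ D | b x ≤ k} := fun x hx => ⟨hx.1, hx.2.le⟩
  rw [hdiff, measure_diff hsubset hmlt.nullMeasurableSet hfin2,
    heqE, tsub_self]

/-- μ-a.e. uniqueness of the solution to functional sparse clustering: if the
distribution function `φ(t) = μ({x ∈ D : b(x) < t})` is continuous and `k ≥ 0`
satisfies `μ({x ∈ D : b(x) > k}) = μ(D) − m`, then every feasible `g` attaining
`∫_D g b dμ = ∫_D w* b dμ` equals `w*` μ-a.e. on `D`. -/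
theorem functional_sparse_clustering_uniqueness (D : Set ℝ) (hD : IsCompact D)
    (m : ℝ) (b : ℝ → ℝ)
    (hm : 0 < m) (hmD : ENNReal.ofReal m < volume D) (hDfin : volume D < ⊤)
    (hb : ContinuousOn b D)
    (hbpos : ∀ᵐ x ∂(volume.restrict D), 0 ≤ b x)
    (hphi : Continuous fun t : ℝ => (volume {x ∈ D | b x < t}).toReal)
    (k : ℝ) (hk : 0 ≤ k)
    (hkm : volume (Bf D b k) = volume D - ENNReal.ofReal m)
    (g : ℝ → ℝ) (hg : FeasibleF D m g)
    (heq : (∫ x in D, g x * b x) = ∫ x in D, wstarF D b k x * b x) :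
    g =ᵐ[volume.restrict D] wstarF D b k := by
  classical
  have hDm : MeasurableSet D := hD.isClosed.measurableSet
  haveI : IsFiniteMeasure (volume.restrict D) := ⟨by rwa [Measure.restrict_apply_univ]⟩
  have hBD : Bf D b k ⊆ D := fun x hx => hx.1
  have hBmeas : MeasurableSet (Bf D b k) := measSep hDm hb isOpen_Ioi
  have hb2 : IntegrableOn (fun x => b x ^ 2) D := (hb.pow 2).integrableOn_compact hD
  set N := ∫ y in Bf D b k, b y ^ 2 with hNdef
  have hBpos : 0 < volume (Bf D b k) := by
    rw [hkm]; exact tsub_pos_iff_lt.mpr hmD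
  have hNpos : 0 < N := by
    rw [hNdef]
    refine (setIntegral_pos_iff_support_of_nonneg_ae
      (Filter.Eventually.of_forall fun x => sq_nonneg _) (hb2.mono_set hBD)).mpr ?_
    have hsub : Bf D b k ⊆ Function.support fun y => b y ^ 2 := by
      intro x hx
      have hx0 : 0 < b x := lt_of_le_of_lt hk hx.2
      exact Function.mem_support.mpr (pow_ne_zero 2 hx0.ne')
    rwa [Set.inter_eq_self_of_subset_right hsub]
  set c := Real.sqrt N with hcdef
  have hc : 0 < c := Real.sqrt_pos.mpr hNpos
  have hc2 : c ^ 2 = N := Real.sq_sqrt hNpos.le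
  -- value of the optimal objective
  have hwint : (∫ x in D, wstarF D b k x * b x) = c := by
    have h1 : ∀ x, wstarF D b k x * b x
        = (Bf D b k).indicator (fun y => b y / c * b y) x := by
      intro x
      unfold wstarF
      rw [← hNdef, ← hcdef]
      exact (Set.indicator_mul_left _ _ _).symm
    calc (∫ x in D, wstarF D b k x * b x)
        = ∫ x in D, (Bf D b k).indicator (fun y => b y / c * b y) x := by
          exact integral_congr_ae (Filter.Eventually.of_forall fun x => h1 x)
      _ = ∫ x in D ∩ Bf D b k, b x / c * b x := by rw [setIntegral_indicator hBmeas]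
      _ = ∫ x in Bf D b k, b x / c * b x := by
          rw [Set.inter_eq_self_of_subset_right hBD]
      _ = ∫ x in Bf D b k, b x ^ 2 / c := by
          exact integral_congr_ae (Filter.Eventually.of_forall fun x => by ring)
      _ = N / c := by rw [integral_div, ← hNdef]
      _ = c := by rw [hcdef, Real.div_sqrt]
  have hS : (∫ x in D, g x * b x) = c := heq.trans hwint
  obtain ⟨hgL2, hgle, hgnn, hgm⟩ := hg
  have hgsm := hgL2.aestronglyMeasurable
  set g' : ℝ → ℝ := hgsm.mk g with hg'def
  have hg'meas : Measurable g' := hgsm.stronglyMeasurable_mk.measurable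
  have hgg' : g =ᵐ[volume.restrict D] g' := hgsm.ae_eq_mk
  have hg'L2 : MemLp g' 2 (volume.restrict D) := hgL2.ae_eq hgg'
  set A := {x ∈ D | g' x ≠ 0} with hAdef
  have hAD : A ⊆ D := fun x hx => hx.1
  have hAmeas : MeasurableSet A := by
    have hA' : A = D ∩ g' ⁻¹' ({0}ᶜ) := rfl
    rw [hA']
    exact hDm.inter ((hg'meas (measurableSet_singleton 0)).compl)
  -- transfer the zero-measure constraint to g'
  have hgm' : ENNReal.ofReal m ≤ volume {x ∈ D | g' x = 0} := by
    have hnull : volume ({x | g x ≠ g' x} ∩ D) = 0 := by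
      have h := hgg'
      rw [Filter.EventuallyEq, ae_iff, Measure.restrict_apply' hDm] at h
      exact h
    calc ENNReal.ofReal m ≤ volume {x ∈ D | g x = 0} := hgm
      _ ≤ volume ({x ∈ D | g' x = 0} ∪ ({x | g x ≠ g' x} ∩ D)) := by
          apply measure_mono
          rintro x ⟨hxD, hx0⟩
          by_cases h : g x = g' x
          · exact Or.inl ⟨hxD, by rw [← h]; exact hx0⟩
          · exact Or.inr ⟨h, hxD⟩
      _ ≤ volume {x ∈ D | g' x = 0} + volume ({x | g x ≠ g' x} ∩ D) := measure_union_le _ _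
      _ = volume {x ∈ D | g' x = 0} := by rw [hnull, add_zero]
  -- volume A ≤ volume B
  have hZsub : {x ∈ D | g' x = 0} ⊆ D := fun x hx => hx.1
  have hZmeas : MeasurableSet {x ∈ D | g' x = 0} := by
    have hZ' : {x ∈ D | g' x = 0} = D ∩ g' ⁻¹' {0} := rfl
    rw [hZ']
    exact hDm.inter (hg'meas (measurableSet_singleton 0))
  have hDsplit : A = D \ {x ∈ D | g' x = 0} := by
    ext x
    constructor
    · rintro ⟨hxD, hx⟩; exact ⟨hxD, fun h => hx h.2⟩
    · rintro ⟨hxD, hx⟩; exact ⟨hxD, fun h => hx ⟨hxD, h⟩⟩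
  have hvolA : volume A ≤ volume (Bf D b k) := by
    rw [hkm, hDsplit, measure_diff hZsub hZmeas.nullMeasurableSet
      ((lt_of_le_of_lt (measure_mono hZsub) hDfin)).ne]
    exact tsub_le_tsub_left hgm' _
  -- measures of the set differences
  have hfinAdB : volume (A \ Bf D b k) < ⊤ :=
    lt_of_le_of_lt (measure_mono fun x hx => hAD hx.1) hDfin
  have hfinBdA : volume (Bf D b k \ A) < ⊤ :=
    lt_of_le_of_lt (measure_mono fun x hx => hBD hx.1) hDfin
  have hmdiff : volume (A \ Bf D b k) ≤ volume (Bf D b k \ A) := by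
    have h1 := measure_diff_add_inter (μ := volume) A hBmeas
    have h2 := measure_diff_add_inter (μ := volume) (Bf D b k) hAmeas
    have hfinAB : volume (A ∩ Bf D b k) ≠ ⊤ :=
      (lt_of_le_of_lt (measure_mono fun x hx => hAD hx.1) hDfin).ne
    have hle : volume (A \ Bf D b k) + volume (A ∩ Bf D b k)
        ≤ volume (Bf D b k \ A) + volume (A ∩ Bf D b k) := by
      rw [h1]
      calc volume A ≤ volume (Bf D b k) := hvolA
        _ = volume (Bf D b k \ A) + volume (Bf D b k ∩ A) := h2.symm
        _ = volume (Bf D b k \ A) + volume (A ∩ Bf D b k) := by rw [Set.inter_comm]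
    exact (ENNReal.add_le_add_iff_right hfinAB).mp hle
  have ha12 : (volume (A \ Bf D b k)).toReal ≤ (volume (Bf D b k \ A)).toReal :=
    (ENNReal.toReal_le_toReal hfinAdB.ne hfinBdA.ne).mpr hmdiff
  -- integrability on pieces
  have hiAB : IntegrableOn (fun x => b x ^ 2) (A ∩ Bf D b k) :=
    hb2.mono_set fun x hx => hAD hx.1
  have hiAdB : IntegrableOn (fun x => b x ^ 2) (A \ Bf D b k) :=
    hb2.mono_set fun x hx => hAD hx.1
  have hiBdA : IntegrableOn (fun x => b x ^ 2) (Bf D b k \ A) :=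
    hb2.mono_set fun x hx => hBD hx.1
  -- splitting the integrals
  have hsplitA : (∫ x in A, b x ^ 2)
      = (∫ x in A ∩ Bf D b k, b x ^ 2) + ∫ x in A \ Bf D b k, b x ^ 2 := by
    have hdisj : Disjoint (A ∩ Bf D b k) (A \ Bf D b k) :=
      Set.disjoint_left.mpr fun x hx1 hx2 => hx2.2 hx1.2
    have := setIntegral_union hdisj (hAmeas.diff hBmeas) hiAB hiAdB
      (f := fun x => b x ^ 2) (μ := volume)
    rwa [Set.inter_union_diff] at this
  have hsplitB : N = (∫ x in A ∩ Bf D b k, b x ^ 2) + ∫ x in Bf D b k \ A, b x ^ 2 := by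
    have hdisj : Disjoint (Bf D b k ∩ A) (Bf D b k \ A) :=
      Set.disjoint_left.mpr fun x hx1 hx2 => hx2.2 hx1.2
    have hiBA : IntegrableOn (fun x => b x ^ 2) (Bf D b k ∩ A) :=
      hb2.mono_set fun x hx => hBD hx.1
    have := setIntegral_union hdisj (hBmeas.diff hAmeas) hiBA hiBdA
      (f := fun x => b x ^ 2) (μ := volume)
    rw [Set.inter_union_diff] at this
    rw [hNdef, this, Set.inter_comm]
  -- the bathtub bounds
  have hbd1 : (∫ x in A \ Bf D b k, b x ^ 2) ≤ k ^ 2 * (volume (A \ Bf D b k)).toReal := by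
    have hub : ∀ᵐ x ∂volume.restrict (A \ Bf D b k), b x ^ 2 ≤ k ^ 2 := by
      filter_upwards [ae_restrict_mem (hAmeas.diff hBmeas),
        ae_restrict_of_ae_restrict_of_subset (fun x hx => hAD hx.1) hbpos] with x hx hbx
      have hxk : b x ≤ k := not_lt.mp fun h => hx.2 ⟨hAD hx.1, h⟩
      exact pow_le_pow_left₀ hbx hxk 2
    calc (∫ x in A \ Bf D b k, b x ^ 2) ≤ ∫ _x in A \ Bf D b k, k ^ 2 :=
        integral_mono_ae hiAdB (integrableOn_const hfinAdB.ne) hub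
      _ = k ^ 2 * (volume (A \ Bf D b k)).toReal := by
          rw [setIntegral_const, smul_eq_mul, mul_comm, measureReal_def]
  have hbd2 : k ^ 2 * (volume (Bf D b k \ A)).toReal ≤ ∫ x in Bf D b k \ A, b x ^ 2 := by
    have hub : ∀ᵐ x ∂volume.restrict (Bf D b k \ A), k ^ 2 ≤ b x ^ 2 := by
      filter_upwards [ae_restrict_mem (hBmeas.diff hAmeas)] with x hx
      exact pow_le_pow_left₀ hk hx.1.2.le 2
    have hmono : (∫ _x in Bf D b k \ A, k ^ 2) ≤ ∫ x in Bf D b k \ A, b x ^ 2 :=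
      integral_mono_ae (integrableOn_const hfinBdA.ne) hiBdA hub
    rwa [setIntegral_const, smul_eq_mul, mul_comm, measureReal_def] at hmono
  have hbd3 : k ^ 2 * (volume (A \ Bf D b k)).toReal
      ≤ k ^ 2 * (volume (Bf D b k \ A)).toReal :=
    mul_le_mul_of_nonneg_left ha12 (sq_nonneg k)
  have hbt : (∫ x in A, b x ^ 2) ≤ N := by
    rw [hsplitA, hsplitB]
    linarith
  -- Memℒp facts
  have hbSM : AEStronglyMeasurable b (volume.restrict D) := hb.aestronglyMeasurable hDm
  obtain ⟨M, hM⟩ := hD.exists_bound_of_continuousOn hb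
  have hbL2 : MemLp b 2 (volume.restrict D) := MemLp.of_bound hbSM M (by
    filter_upwards [ae_restrict_mem hDm] with x hx using hM x hx)
  have hbAL2 : MemLp (A.indicator b) 2 (volume.restrict D) := hbL2.indicator hAmeas
  have honehalf : (1 : ℝ≥0∞) / 1 = 1 / 2 + 1 / 2 := by
    rw [one_div, one_div, inv_one, ENNReal.inv_two_add_inv_two]
  have i1 : Integrable (fun x => g' x ^ 2) (volume.restrict D) := hg'L2.integrable_sq
  have i3 : Integrable (fun x => A.indicator b x ^ 2) (volume.restrict D) :=
    hbAL2.integrable_sq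
  have hi2 : Integrable (fun x => g' x * A.indicator b x) (volume.restrict D) := by
    have hsm := hbAL2.smul (r := 1) hg'L2
    rw [memLp_one_iff_integrable] at hsm
    exact hsm.congr (Filter.Eventually.of_forall fun x => by
      simp [Pi.smul_apply, smul_eq_mul])
  -- identification of the pieces of the expanded square
  have hIA : (∫ x in D, A.indicator b x ^ 2) = ∫ x in A, b x ^ 2 := by
    have hind : ∀ x, A.indicator b x ^ 2 = A.indicator (fun y => b y ^ 2) x := by
      intro x; by_cases h : x ∈ A <;> simp [h]
    calc (∫ x in D, A.indicator b x ^ 2)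
        = ∫ x in D, A.indicator (fun y => b y ^ 2) x :=
          integral_congr_ae (Filter.Eventually.of_forall fun x => hind x)
      _ = ∫ x in D ∩ A, b x ^ 2 := setIntegral_indicator hAmeas
      _ = ∫ x in A, b x ^ 2 := by rw [Set.inter_eq_self_of_subset_right hAD]
  have hcross : (∫ x in D, g' x * A.indicator b x) = c := by
    have h1 : (∫ x in D, g' x * A.indicator b x) = ∫ x in D, g' x * b x := by
      apply setIntegral_congr_fun hDm
      intro x hx
      by_cases h : g' x = 0
      · simp [h]
      · have hxA : x ∈ A := ⟨hx, h⟩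
        simp [Set.indicator_of_mem hxA]
    have h2 : (∫ x in D, g' x * b x) = ∫ x in D, g x * b x :=
      integral_congr_ae (by filter_upwards [hgg'] with x hx; rw [hx])
    rw [h1, h2, hS]
  have hu1 : (∫ x in D, g' x ^ 2) ≤ 1 := by
    have hueq : (∫ x in D, g' x ^ 2) = ∫ x in D, g x ^ 2 :=
      integral_congr_ae (by filter_upwards [hgg'] with x hx; rw [hx])
    rw [hueq]; exact hgle
  -- the completed square
  have hexp : (fun x => (c * g' x - A.indicator b x) ^ 2) = fun x =>
      c ^ 2 * g' x ^ 2 - 2 * c * (g' x * A.indicator b x) + A.indicator b x ^ 2 := by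
    funext x; ring
  have iA : Integrable (fun x => c ^ 2 * g' x ^ 2) (volume.restrict D) := i1.const_mul _
  have iB : Integrable (fun x => 2 * c * (g' x * A.indicator b x)) (volume.restrict D) :=
    hi2.const_mul _
  have iSub : Integrable
      (fun x => c ^ 2 * g' x ^ 2 - 2 * c * (g' x * A.indicator b x))
      (volume.restrict D) := iA.sub iB
  have hFint : Integrable (fun x => (c * g' x - A.indicator b x) ^ 2)
      (volume.restrict D) := by
    rw [hexp]
    exact iSub.add i3
  have hQval : (∫ x in D, (c * g' x - A.indicator b x) ^ 2)
      = c ^ 2 * (∫ x in D, g' x ^ 2) - 2 * c * c + ∫ x in A, b x ^ 2 := by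
    rw [hexp, integral_add iSub i3, integral_sub iA iB, integral_const_mul,
      integral_const_mul, hcross, hIA]
  have hQ0 : 0 ≤ ∫ x in D, (c * g' x - A.indicator b x) ^ 2 :=
    integral_nonneg fun x => sq_nonneg _
  have hcu : c ^ 2 * (∫ x in D, g' x ^ 2) ≤ c ^ 2 :=
    (mul_le_mul_of_nonneg_left hu1 (sq_nonneg c)).trans_eq (mul_one _)
  have htN : (∫ x in A, b x ^ 2) = N := by
    rw [hQval] at hQ0
    have h2cc : 2 * c * c = 2 * c ^ 2 := by ring
    rw [h2cc] at hQ0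
    linarith
  have hQeq0 : (∫ x in D, (c * g' x - A.indicator b x) ^ 2) = 0 := by
    rw [hQval, htN]
    have h2cc : 2 * c * c = 2 * c ^ 2 := by ring
    rw [h2cc]
    have hQ0' := hQ0
    rw [hQval, htN, h2cc] at hQ0'
    linarith
  -- a.e. identification of g' on A
  have h5 : ∀ᵐ x ∂volume.restrict D, c * g' x = A.indicator b x := by
    have hFzero : (fun x => (c * g' x - A.indicator b x) ^ 2)
        =ᵐ[volume.restrict D] 0 :=
      (integral_eq_zero_iff_of_nonneg (fun x => sq_nonneg _) hFint).mp hQeq0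
    filter_upwards [hFzero] with x hx
    have hx' : (c * g' x - A.indicator b x) ^ 2 = 0 := hx
    have := pow_eq_zero_iff (n := 2) (by norm_num) |>.mp hx'
    linarith [this]
  -- equalities in the bathtub chain
  have heq1 : (∫ x in A \ Bf D b k, b x ^ 2) = ∫ x in Bf D b k \ A, b x ^ 2 := by
    have := htN
    rw [hsplitA, hsplitB] at this
    linarith
  have heq2 : (∫ x in Bf D b k \ A, b x ^ 2)
      = k ^ 2 * (volume (Bf D b k \ A)).toReal := by linarith
  have heq3 : (∫ x in A \ Bf D b k, b x ^ 2)
      = k ^ 2 * (volume (A \ Bf D b k)).toReal := by linarith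
  -- volume (B \ A) = 0
  have hBA0 : volume (Bf D b k \ A) = 0 := by
    have hconst : (∫ _x in Bf D b k \ A, (k ^ 2 : ℝ))
        = k ^ 2 * (volume (Bf D b k \ A)).toReal := by
      rw [setIntegral_const, smul_eq_mul, mul_comm, measureReal_def]
    have hint0 : (∫ x in Bf D b k \ A, (b x ^ 2 - k ^ 2)) = 0 := by
      rw [integral_sub hiBdA (integrableOn_const hfinBdA.ne), hconst, heq2,
        sub_self]
    have hnn : 0 ≤ᵐ[volume.restrict (Bf D b k \ A)] fun x => b x ^ 2 - k ^ 2 := by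
      filter_upwards [ae_restrict_mem (hBmeas.diff hAmeas)] with x hx
      have := pow_le_pow_left₀ hk hx.1.2.le 2
      simp only [Pi.zero_apply]
      linarith
    have hae0 : (fun x => b x ^ 2 - k ^ 2) =ᵐ[volume.restrict (Bf D b k \ A)] 0 :=
      (integral_eq_zero_iff_of_nonneg_ae hnn
        (hiBdA.sub (integrableOn_const hfinBdA.ne))).mp hint0
    have hfalse : ∀ᵐ _x ∂volume.restrict (Bf D b k \ A), False := by
      filter_upwards [hae0, ae_restrict_mem (hBmeas.diff hAmeas)] with x hx hmem
      have hx' : b x ^ 2 - k ^ 2 = 0 := hx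
      have hlt : k < b x := hmem.1.2
      nlinarith
    exact Measure.restrict_eq_zero.mp
      (ae_eq_bot.mp (Filter.eventually_false_iff_eq_bot.mp hfalse))
  -- volume (A \ B) = 0
  have hAB0 : volume (A \ Bf D b k) = 0 := by
    have hconst : (∫ _x in A \ Bf D b k, (k ^ 2 : ℝ))
        = k ^ 2 * (volume (A \ Bf D b k)).toReal := by
      rw [setIntegral_const, smul_eq_mul, mul_comm, measureReal_def]
    have hint0 : (∫ x in A \ Bf D b k, (k ^ 2 - b x ^ 2)) = 0 := by
      rw [integral_sub (integrableOn_const (C := k ^ 2) hfinAdB.ne) hiAdB, hconst, heq3,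
        sub_self]
    have hnn : 0 ≤ᵐ[volume.restrict (A \ Bf D b k)] fun x => k ^ 2 - b x ^ 2 := by
      filter_upwards [ae_restrict_mem (hAmeas.diff hBmeas),
        ae_restrict_of_ae_restrict_of_subset (fun x hx => hAD hx.1) hbpos] with x hx hbx
      have hxk : b x ≤ k := not_lt.mp fun h => hx.2 ⟨hAD hx.1, h⟩
      have := pow_le_pow_left₀ hbx hxk 2
      simp only [Pi.zero_apply]
      linarith
    have hae0 : (fun x => k ^ 2 - b x ^ 2) =ᵐ[volume.restrict (A \ Bf D b k)] 0 :=
      (integral_eq_zero_iff_of_nonneg_ae hnn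
        ((integrableOn_const hfinAdB.ne).sub hiAdB)).mp hint0
    have haek : ∀ᵐ x ∂volume.restrict (A \ Bf D b k), x ∈ {y ∈ D | b y = k} := by
      filter_upwards [hae0, ae_restrict_mem (hAmeas.diff hBmeas),
        ae_restrict_of_ae_restrict_of_subset (fun x hx => hAD hx.1) hbpos] with x hx hmem hbx
      have hx' : k ^ 2 - b x ^ 2 = 0 := hx
      have hxk : b x ≤ k := not_lt.mp fun h => hmem.2 ⟨hAD hmem.1, h⟩
      have hbsq : b x ^ 2 = k ^ 2 := by linarith
      have hbk : b x = k := (sq_eq_sq₀ hbx hk).mp hbsq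
      exact ⟨hAD hmem.1, hbk⟩
    have h0 : volume ({y | y ∉ {y ∈ D | b y = k}} ∩ (A \ Bf D b k)) = 0 := by
      have := ae_iff.mp haek
      rwa [Measure.restrict_apply' (hAmeas.diff hBmeas)] at this
    have hlev : volume {y ∈ D | b y = k} = 0 := levelNull hDm hDfin hb hphi k
    have hsub : A \ Bf D b k
        ⊆ ({y | y ∉ {y ∈ D | b y = k}} ∩ (A \ Bf D b k)) ∪ {y ∈ D | b y = k} := by
      intro x hx
      by_cases h : x ∈ {y ∈ D | b y = k}
      · exact Or.inr h
      · exact Or.inl ⟨h, hx⟩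
    exact measure_mono_null hsub (measure_union_null h0 hlev)
  -- conclusion
  have hSd : volume.restrict D ((A \ Bf D b k) ∪ (Bf D b k \ A)) = 0 := by
    have h1 : volume ((A \ Bf D b k) ∪ (Bf D b k \ A)) = 0 :=
      measure_union_null hAB0 hBA0
    rw [Measure.restrict_apply' hDm]
    exact measure_mono_null Set.inter_subset_left h1
  have hnotin : ∀ᵐ x ∂volume.restrict D, x ∉ (A \ Bf D b k) ∪ (Bf D b k \ A) :=
    measure_eq_zero_iff_ae_notMem.mp hSd
  filter_upwards [hgg', h5, hnotin] with x hx1 hx2 hx3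
  rw [hx1]
  have hgx : g' x = A.indicator b x / c := by
    rw [eq_div_iff hc.ne']
    linarith [hx2]
  rw [hgx]
  show A.indicator b x / c = wstarF D b k x
  unfold wstarF
  rw [← hNdef, ← hcdef]
  by_cases hxB : x ∈ Bf D b k
  · have hxA : x ∈ A := by
      by_contra h
      exact hx3 (Or.inr ⟨hxB, h⟩)
    rw [Set.indicator_of_mem hxA, Set.indicator_of_mem hxB]
  · have hxA : x ∉ A := fun h => hx3 (Or.inl ⟨h, hxB⟩)
    rw [Set.indicator_of_notMem hxA, Set.indicator_of_notMem hxB, zero_div]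

end
end
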